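/- arXiv:2501.05582 — 5 statements merged into one kernel-verified Lean document; each statement's English description precedes it below -/
import Mathlib

section
/- Fix a positive integer n and a partition index p ≤ n. Consider the block-structured system in variables x^1,...,x^n ∈ R^2: A x^i ≤ b^i for i = 1,...,n (where A is the 6×2 matrix with rows (1,0),(−1,0),(0,1),(0,−1),(1,1),(−1,−1)), together with Σ_{i=1}^p x^i − Σ_{i=p+1}^n x^i = 0. If all b^i ∈ Z^6, then the polyhedron P defined by this system is an integral polyhedron (all its vertices have integer coordinates), and moreover each projection of P onto a single block of variables x^i is an integral polyhedron. -/
/-- The matrix with rows `(1,0),(−1,0),(0,1),(0,−1),(1,1),(−1,−1)`. -/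
def Amat : Matrix (Fin 6) (Fin 2) ℝ :=
  !![1, 0; -1, 0; 0, 1; 0, -1; 1, 1; -1, -1]

def IsInt (r : ℝ) : Prop := ∃ z : ℤ, r = z

lemma IsInt.add {a b : ℝ} (ha : IsInt a) (hb : IsInt b) : IsInt (a + b) := by
  obtain ⟨z, rfl⟩ := ha; obtain ⟨w, rfl⟩ := hb; exact ⟨z + w, by push_cast; ring⟩

lemma IsInt.neg {a : ℝ} (ha : IsInt a) : IsInt (-a) := by
  obtain ⟨z, rfl⟩ := ha; exact ⟨-z, by push_cast; ring⟩

lemma IsInt.sub {a b : ℝ} (ha : IsInt a) (hb : IsInt b) : IsInt (a - b) := by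
  obtain ⟨z, rfl⟩ := ha; obtain ⟨w, rfl⟩ := hb; exact ⟨z - w, by push_cast; ring⟩

lemma IsInt.zero : IsInt 0 := ⟨0, by norm_num⟩

lemma IsInt.sum {α : Type*} (s : Finset α) (f : α → ℝ) (h : ∀ a ∈ s, IsInt (f a)) :
    IsInt (∑ a ∈ s, f a) :=
  Finset.sum_induction f IsInt (fun _ _ => IsInt.add) IsInt.zero h

lemma IsInt.sign_mul {s a : ℝ} (hs : s = 1 ∨ s = -1) (ha : IsInt a) : IsInt (s * a) := by
  rcases hs with h | h <;> subst h
  · simpa using ha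
  · simpa using ha.neg

lemma amat_mulVec (v : Fin 2 → ℝ) (r : Fin 6) :
    Amat.mulVec v r = Amat r 0 * v 0 + Amat r 1 * v 1 := by
  simp [Matrix.mulVec, dotProduct, Fin.sum_univ_two]

lemma amat_mulVec0 (v : Fin 2 → ℝ) : Amat.mulVec v 0 = v 0 := by
  rw [amat_mulVec, show Amat 0 0 = 1 from rfl, show Amat 0 1 = 0 from rfl]; ring
lemma amat_mulVec1 (v : Fin 2 → ℝ) : Amat.mulVec v 1 = -v 0 := by
  rw [amat_mulVec, show Amat 1 0 = -1 from rfl, show Amat 1 1 = 0 from rfl]; ring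
lemma amat_mulVec2 (v : Fin 2 → ℝ) : Amat.mulVec v 2 = v 1 := by
  rw [amat_mulVec, show Amat 2 0 = 0 from rfl, show Amat 2 1 = 1 from rfl]; ring
lemma amat_mulVec3 (v : Fin 2 → ℝ) : Amat.mulVec v 3 = -v 1 := by
  rw [amat_mulVec, show Amat 3 0 = 0 from rfl, show Amat 3 1 = -1 from rfl]; ring
lemma amat_mulVec4 (v : Fin 2 → ℝ) : Amat.mulVec v 4 = v 0 + v 1 := by
  rw [amat_mulVec, show Amat 4 0 = 1 from rfl, show Amat 4 1 = 1 from rfl]; ring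
lemma amat_mulVec5 (v : Fin 2 → ℝ) : Amat.mulVec v 5 = -v 0 - v 1 := by
  rw [amat_mulVec, show Amat 5 0 = -1 from rfl, show Amat 5 1 = -1 from rfl]; ring

lemma fin2_cases (l : Fin 2) : l = 0 ∨ l = 1 := by
  rcases l with ⟨v, hv⟩
  interval_cases v
  · exact Or.inl rfl
  · exact Or.inr rfl

lemma fin6_cases (r : Fin 6) : r = 0 ∨ r = 1 ∨ r = 2 ∨ r = 3 ∨ r = 4 ∨ r = 5 := by
  rcases r with ⟨v, hv⟩
  interval_cases v
  · exact Or.inl rfl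
  · exact Or.inr (Or.inl rfl)
  · exact Or.inr (Or.inr (Or.inl rfl))
  · exact Or.inr (Or.inr (Or.inr (Or.inl rfl)))
  · exact Or.inr (Or.inr (Or.inr (Or.inr (Or.inl rfl))))
  · exact Or.inr (Or.inr (Or.inr (Or.inr (Or.inr rfl))))

section Main

variable {n : ℕ} (s : Fin n → ℝ) (b : Fin n → Fin 6 → ℝ) (x : Fin n → Fin 2 → ℝ)

set_option maxHeartbeats 3200000 in
/-- The key combinatorial lemma: a rigid feasible point is integral. -/
lemma rigid_integral (hs : ∀ i, s i = 1 ∨ s i = -1) (hb : ∀ i r, IsInt (b i r))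
    (hineq : ∀ i r, Amat.mulVec (x i) r ≤ b i r)
    (heq : ∀ l, ∑ i, s i * x i l = 0)
    (hrig : ∀ d : Fin n → Fin 2 → ℝ,
      (∀ l, ∑ i, s i * d i l = 0) →
      (∀ i r, Amat.mulVec (x i) r = b i r → Amat.mulVec (d i) r = 0) →
      d = 0) :
    ∀ i l, IsInt (x i l) := by
  classical
  set T : Fin n → Fin 6 → Prop := fun i r => Amat.mulVec (x i) r = b i r with hT
  set Q0 : Fin n → Prop := fun i => T i 0 ∨ T i 1 with hQ0def
  set Q1 : Fin n → Prop := fun i => T i 2 ∨ T i 3 with hQ1def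
  set Q2 : Fin n → Prop := fun i => T i 4 ∨ T i 5 with hQ2def
  have hsq : ∀ i, s i * s i = 1 := by
    intro i; rcases hs i with h | h <;> rw [h] <;> norm_num
  -- basic per-block integrality facts
  have hI0 : ∀ i, Q0 i → IsInt (x i 0) := by
    rintro i (h | h)
    · rw [hT, amat_mulVec0] at h; rw [h]; exact hb i 0
    · rw [hT, amat_mulVec1] at h
      have : x i 0 = -(b i 1) := by linarith
      rw [this]; exact (hb i 1).neg
  have hI1 : ∀ i, Q1 i → IsInt (x i 1) := by
    rintro i (h | h)
    · rw [hT, amat_mulVec2] at h; rw [h]; exact hb i 2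
    · rw [hT, amat_mulVec3] at h
      have : x i 1 = -(b i 3) := by linarith
      rw [this]; exact (hb i 3).neg
  have hI2 : ∀ i, Q2 i → IsInt (x i 0 + x i 1) := by
    rintro i (h | h)
    · rw [hT, amat_mulVec4] at h; rw [h]; exact hb i 4
    · rw [hT, amat_mulVec5] at h
      have : x i 0 + x i 1 = -(b i 5) := by linarith
      rw [this]; exact (hb i 5).neg
  -- rigidity reformulated: any family of directions in the tight nullspaces summing to zero is zero
  have hrig' : ∀ t : Fin n → Fin 2 → ℝ,
      (∀ l, ∑ i, t i l = 0) →
      (∀ i r, T i r → Amat.mulVec (t i) r = 0) →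
      t = 0 := by
    intro t hsum htight
    have hd := hrig (fun i => s i • t i) ?_ ?_
    · funext i l
      have := congrFun (congrFun hd i) l
      simp only [Pi.smul_apply, smul_eq_mul, Pi.zero_apply] at this ⊢
      rcases hs i with h | h <;> rw [h] at this <;> linarith
    · intro l
      have : ∀ i, s i * (s i • t i) l = t i l := by
        intro i
        simp only [Pi.smul_apply, smul_eq_mul, ← mul_assoc, hsq i, one_mul]
      rw [Finset.sum_congr rfl (fun i _ => this i)]; exact hsum l
    · intro i r hTir
      simp [Matrix.mulVec_smul, htight i r hTir]
  -- the three direction vectors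
  -- pair rigidity
  have pair : ∀ (i j : Fin n), i ≠ j → ∀ u : Fin 2 → ℝ, u ≠ 0 →
      (∀ r, T i r → Amat.mulVec u r = 0) → (∀ r, T j r → Amat.mulVec u r = 0) → False := by
    intro i j hij u hu hi hj
    have key := hrig' (fun k => if k = i then u else if k = j then -u else 0) ?_ ?_
    · apply hu
      have h2 := congrFun key i
      rw [if_pos rfl] at h2
      exact h2
    · intro l
      have hpt : ∀ k : Fin n, (if k = i then u else if k = j then -u else 0) l
          = (if k = i then u l else 0) + (if k = j then -u l else 0) := by
        intro k
        split_ifs with h1 h2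
        · exact absurd (h1.symm.trans h2) hij
        · rw [add_zero]
        · rw [zero_add]; rfl
        · rw [add_zero]; rfl
      rw [Finset.sum_congr rfl (fun k _ => hpt k), Finset.sum_add_distrib,
        Finset.sum_ite_eq' Finset.univ i (fun _ => u l),
        Finset.sum_ite_eq' Finset.univ j (fun _ => -u l)]
      simp only [Finset.mem_univ, if_pos]
      ring
    · intro k r hk
      rcases eq_or_ne k i with rfl | hki
      · rw [if_pos rfl]; exact hi r hk
      rcases eq_or_ne k j with rfl | hkj
      · rw [if_neg hki, if_pos rfl, Matrix.mulVec_neg, Pi.neg_apply, hj r hk, neg_zero]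
      · rw [if_neg hki, if_neg hkj, Matrix.mulVec_zero, Pi.zero_apply]
  -- triple rigidity
  have triple : ∀ (i j k : Fin n), i ≠ j → i ≠ k → j ≠ k →
      ∀ u v w : Fin 2 → ℝ, u ≠ 0 → (∀ l, u l + v l + w l = 0) →
      (∀ r, T i r → Amat.mulVec u r = 0) → (∀ r, T j r → Amat.mulVec v r = 0) →
      (∀ r, T k r → Amat.mulVec w r = 0) → False := by
    intro i j k hij hik hjk u v w hu hsum0 hi hj hk
    have key := hrig'
      (fun m => if m = i then u else if m = j then v else if m = k then w else 0) ?_ ?_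
    · apply hu
      have h2 := congrFun key i
      rw [if_pos rfl] at h2
      exact h2
    · intro l
      have hpt : ∀ m : Fin n, (if m = i then u else if m = j then v else if m = k then w else 0) l
          = (if m = i then u l else 0) + ((if m = j then v l else 0) + (if m = k then w l else 0)) := by
        intro m
        rcases eq_or_ne m i with rfl | h1
        · simp [hij, hik]
        rcases eq_or_ne m j with rfl | h2
        · simp [Ne.symm hij, hjk, h1]
        rcases eq_or_ne m k with rfl | h3
        · simp [h1, h2]
        · simp [h1, h2, h3]
      rw [Finset.sum_congr rfl (fun m _ => hpt m), Finset.sum_add_distrib,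
        Finset.sum_add_distrib,
        Finset.sum_ite_eq' Finset.univ i (fun _ => u l),
        Finset.sum_ite_eq' Finset.univ j (fun _ => v l),
        Finset.sum_ite_eq' Finset.univ k (fun _ => w l)]
      simp only [Finset.mem_univ, if_pos]
      linarith [hsum0 l]
    · intro m r hm
      rcases eq_or_ne m i with rfl | h1
      · rw [if_pos rfl]; exact hi r hm
      rcases eq_or_ne m j with rfl | h2
      · rw [if_neg h1, if_pos rfl]; exact hj r hm
      rcases eq_or_ne m k with rfl | h3
      · rw [if_neg h1, if_neg h2, if_pos rfl]; exact hk r hm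
      · rw [if_neg h1, if_neg h2, if_neg h3, Matrix.mulVec_zero, Pi.zero_apply]
  -- nullspace membership of the three special directions
  have he1 : (![0, 1] : Fin 2 → ℝ) ≠ 0 := by
    intro h; have := congrFun h 1; norm_num at this
  have he2 : (![-1, 0] : Fin 2 → ℝ) ≠ 0 := by
    intro h; have := congrFun h 0; norm_num at this
  have he3 : (![1, -1] : Fin 2 → ℝ) ≠ 0 := by
    intro h; have := congrFun h 0; norm_num at this
  have hN1 : ∀ i, ¬Q1 i → ¬Q2 i → ∀ r, T i r → Amat.mulVec ![0, 1] r = 0 := by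
    intro i h1 h2 r hr
    rcases fin6_cases r with rfl | rfl | rfl | rfl | rfl | rfl
    · rw [amat_mulVec0]; simp
    · rw [amat_mulVec1]; simp
    · exact absurd (Or.inl hr) h1
    · exact absurd (Or.inr hr) h1
    · exact absurd (Or.inl hr) h2
    · exact absurd (Or.inr hr) h2
  have hN2 : ∀ i, ¬Q0 i → ¬Q2 i → ∀ r, T i r → Amat.mulVec ![-1, 0] r = 0 := by
    intro i h0 h2 r hr
    rcases fin6_cases r with rfl | rfl | rfl | rfl | rfl | rfl
    · exact absurd (Or.inl hr) h0
    · exact absurd (Or.inr hr) h0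
    · rw [amat_mulVec2]; simp
    · rw [amat_mulVec3]; simp
    · exact absurd (Or.inl hr) h2
    · exact absurd (Or.inr hr) h2
  have hN3 : ∀ i, ¬Q0 i → ¬Q1 i → ∀ r, T i r → Amat.mulVec ![1, -1] r = 0 := by
    intro i h0 h1 r hr
    rcases fin6_cases r with rfl | rfl | rfl | rfl | rfl | rfl
    · exact absurd (Or.inl hr) h0
    · exact absurd (Or.inr hr) h0
    · exact absurd (Or.inl hr) h1
    · exact absurd (Or.inr hr) h1
    · rw [amat_mulVec4]; norm_num
    · rw [amat_mulVec5]; norm_num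
  -- solving for a single unknown block from the coupling equation
  have solve : ∀ (l : Fin 2) (j : Fin n), (∀ i, i ≠ j → IsInt (x i l)) → IsInt (x j l) := by
    intro l j h
    have hsplit := heq l
    rw [← Finset.add_sum_erase Finset.univ _ (Finset.mem_univ j)] at hsplit
    have hint : IsInt (∑ i ∈ Finset.univ.erase j, s i * x i l) :=
      IsInt.sum _ _ (fun i hi => IsInt.sign_mul (hs i) (h i (Finset.ne_of_mem_erase hi)))
    have h1 : s j * x j l = -∑ i ∈ Finset.univ.erase j, s i * x i l := by linarith
    have h2 : x j l = s j * (s j * x j l) := by rw [← mul_assoc, hsq j, one_mul]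
    rw [h2, h1]
    exact IsInt.sign_mul (hs j) hint.neg
  -- integrality from partial knowledge
  have hK0 : ∀ j, ¬(¬Q0 j ∧ ¬Q2 j) → ¬(¬Q0 j ∧ ¬Q1 j) → IsInt (x j 0) := by
    intro j hb1 hb2
    by_cases h0 : Q0 j
    · exact hI0 j h0
    · have h2 : Q2 j := by tauto
      have h1 : Q1 j := by tauto
      have heq0 : x j 0 = (x j 0 + x j 1) - x j 1 := by ring
      rw [heq0]; exact (hI2 j h2).sub (hI1 j h1)
  have hK1 : ∀ j, ¬(¬Q1 j ∧ ¬Q2 j) → ¬(¬Q0 j ∧ ¬Q1 j) → IsInt (x j 1) := by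
    intro j hb0 hb2
    by_cases h1 : Q1 j
    · exact hI1 j h1
    · have h2 : Q2 j := by tauto
      have h0 : Q0 j := by tauto
      have heq1 : x j 1 = (x j 0 + x j 1) - x j 0 := by ring
      rw [heq1]; exact (hI2 j h2).sub (hI0 j h0)
  have hK0' : ∀ j, ¬(¬Q0 j ∧ ¬Q2 j) → IsInt (x j 1) → IsInt (x j 0) := by
    intro j hb1 hint1
    by_cases h0 : Q0 j
    · exact hI0 j h0
    · have h2 : Q2 j := by tauto
      have heq0 : x j 0 = (x j 0 + x j 1) - x j 1 := by ring
      rw [heq0]; exact (hI2 j h2).sub hint1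
  have hK1' : ∀ j, ¬(¬Q1 j ∧ ¬Q2 j) → IsInt (x j 0) → IsInt (x j 1) := by
    intro j hb0 hint0
    by_cases h1 : Q1 j
    · exact hI1 j h1
    · have h2 : Q2 j := by tauto
      have heq1 : x j 1 = (x j 0 + x j 1) - x j 0 := by ring
      rw [heq1]; exact (hI2 j h2).sub hint0
  -- main case analysis
  by_cases hcex : ∃ c, ¬Q0 c ∧ ¬Q1 c
  · obtain ⟨c, hc⟩ := hcex
    have hB2only : ∀ j, j ≠ c → ¬(¬Q0 j ∧ ¬Q1 j) := by
      intro j hjc hj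
      exact pair j c hjc ![1, -1] he3 (hN3 j hj.1 hj.2) (hN3 c hc.1 hc.2)
    by_cases haex : ∃ a, a ≠ c ∧ ¬Q1 a ∧ ¬Q2 a
    · obtain ⟨a, hac, ha⟩ := haex
      have hB0only : ∀ j, j ≠ a → ¬(¬Q1 j ∧ ¬Q2 j) := by
        intro j hja hj
        exact pair j a hja ![0, 1] he1 (hN1 j hj.1 hj.2) (hN1 a ha.1 ha.2)
      have hnB1 : ∀ j, ¬(¬Q0 j ∧ ¬Q2 j) := by
        intro j hj
        by_cases hjc : j = c
        · subst hjc
          exact hB0only j (Ne.symm hac) ⟨hc.2, hj.2⟩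
        · by_cases hja : j = a
          · subst hja
            exact hB2only j hjc ⟨hj.1, ha.1⟩
          · exact triple a j c (Ne.symm hja) hac hjc ![0, 1] ![-1, 0] ![1, -1] he1
              (by intro l; fin_cases l <;> norm_num)
              (hN1 a ha.1 ha.2) (hN2 j hj.1 hj.2) (hN3 c hc.1 hc.2)
      have h0 : ∀ j, j ≠ c → IsInt (x j 0) := fun j hjc => hK0 j (hnB1 j) (hB2only j hjc)
      have hc0 : IsInt (x c 0) := solve 0 c h0
      have hc1 : IsInt (x c 1) := hK1' c (hB0only c (Ne.symm hac)) hc0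
      have h1 : ∀ j, j ≠ a → IsInt (x j 1) := by
        intro j hja
        by_cases hjc : j = c
        · subst hjc; exact hc1
        · exact hK1 j (hB0only j hja) (hB2only j hjc)
      have ha1 : IsInt (x a 1) := solve 1 a h1
      intro i l
      fin_cases l
      · by_cases hic : i = c
        · subst hic; exact hc0
        · exact h0 i hic
      · by_cases hia : i = a
        · subst hia; exact ha1
        · exact h1 i hia
    · have hB0none : ∀ a, a ≠ c → ¬(¬Q1 a ∧ ¬Q2 a) := fun a hac h => haex ⟨a, hac, h⟩
      by_cases hbex : ∃ d, d ≠ c ∧ ¬Q0 d ∧ ¬Q2 d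
      · obtain ⟨d, hdc, hd⟩ := hbex
        have hB1only : ∀ j, j ≠ d → ¬(¬Q0 j ∧ ¬Q2 j) := by
          intro j hjd hj
          exact pair j d hjd ![-1, 0] he2 (hN2 j hj.1 hj.2) (hN2 d hd.1 hd.2)
        have hnB0 : ∀ j, ¬(¬Q1 j ∧ ¬Q2 j) := by
          intro j hj
          by_cases hjc : j = c
          · subst hjc
            exact hB1only j (Ne.symm hdc) ⟨hc.1, hj.2⟩
          · by_cases hjd : j = d
            · subst hjd; exact hB0none j hjc hj
            · exact triple j d c hjd hjc hdc ![0, 1] ![-1, 0] ![1, -1] he1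
                (by intro l; fin_cases l <;> norm_num)
                (hN1 j hj.1 hj.2) (hN2 d hd.1 hd.2) (hN3 c hc.1 hc.2)
        have h1 : ∀ j, j ≠ c → IsInt (x j 1) := fun j hjc => hK1 j (hnB0 j) (hB2only j hjc)
        have hc1 : IsInt (x c 1) := solve 1 c h1
        have hc0 : IsInt (x c 0) := hK0' c (hB1only c (Ne.symm hdc)) hc1
        have h0 : ∀ j, j ≠ d → IsInt (x j 0) := by
          intro j hjd
          by_cases hjc : j = c
          · subst hjc; exact hc0
          · exact hK0 j (hB1only j hjd) (hB2only j hjc)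
        have hd0 : IsInt (x d 0) := solve 0 d h0
        intro i l
        fin_cases l
        · by_cases hid : i = d
          · subst hid; exact hd0
          · exact h0 i hid
        · by_cases hic : i = c
          · subst hic; exact hc1
          · exact h1 i hic
      · have hB1none : ∀ a, a ≠ c → ¬(¬Q0 a ∧ ¬Q2 a) := fun a hac h => hbex ⟨a, hac, h⟩
        have h0 : ∀ j, j ≠ c → IsInt (x j 0) :=
          fun j hjc => hK0 j (hB1none j hjc) (hB2only j hjc)
        have h1 : ∀ j, j ≠ c → IsInt (x j 1) :=
          fun j hjc => hK1 j (hB0none j hjc) (hB2only j hjc)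
        have hc0 : IsInt (x c 0) := solve 0 c h0
        have hc1 : IsInt (x c 1) := solve 1 c h1
        intro i l
        fin_cases l
        · by_cases hic : i = c
          · subst hic; exact hc0
          · exact h0 i hic
        · by_cases hic : i = c
          · subst hic; exact hc1
          · exact h1 i hic
  · have hnB2 : ∀ j, ¬(¬Q0 j ∧ ¬Q1 j) := fun j h => hcex ⟨j, h⟩
    have h0 : ∀ i, IsInt (x i 0) := by
      by_cases hbex : ∃ d, ¬Q0 d ∧ ¬Q2 d
      · obtain ⟨d, hd⟩ := hbex
        have hB1only : ∀ j, j ≠ d → ¬(¬Q0 j ∧ ¬Q2 j) := by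
          intro j hjd hj
          exact pair j d hjd ![-1, 0] he2 (hN2 j hj.1 hj.2) (hN2 d hd.1 hd.2)
        have h0' : ∀ j, j ≠ d → IsInt (x j 0) :=
          fun j hjd => hK0 j (hB1only j hjd) (hnB2 j)
        intro i
        by_cases hid : i = d
        · subst hid; exact solve 0 i h0'
        · exact h0' i hid
      · intro i
        exact hK0 i (fun h => hbex ⟨i, h⟩) (hnB2 i)
    have h1 : ∀ i, IsInt (x i 1) := by
      by_cases haex : ∃ a, ¬Q1 a ∧ ¬Q2 a
      · obtain ⟨a, ha⟩ := haex
        have hB0only : ∀ j, j ≠ a → ¬(¬Q1 j ∧ ¬Q2 j) := by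
          intro j hja hj
          exact pair j a hja ![0, 1] he1 (hN1 j hj.1 hj.2) (hN1 a ha.1 ha.2)
        have h1' : ∀ j, j ≠ a → IsInt (x j 1) :=
          fun j hja => hK1 j (hB0only j hja) (hnB2 j)
        intro i
        by_cases hia : i = a
        · subst hia; exact solve 1 i h1'
        · exact h1' i hia
      · intro i
        exact hK1 i (fun h => haex ⟨i, h⟩) (hnB2 i)
    intro i l
    fin_cases l
    · exact h0 i
    · exact h1 i

set_option maxHeartbeats 1600000 in
lemma extremePoint_integral (hs : ∀ i, s i = 1 ∨ s i = -1) (hb : ∀ i r, IsInt (b i r))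
    (hx : x ∈ Set.extremePoints ℝ {y : Fin n → Fin 2 → ℝ |
      (∀ i, ∀ r : Fin 6, Amat.mulVec (y i) r ≤ b i r) ∧ (∑ i : Fin n, s i • y i) = 0}) :
    ∀ i l, IsInt (x i l) := by
  classical
  obtain ⟨hxP, hext⟩ := hx
  obtain ⟨hineq, heqf⟩ := hxP
  have heq : ∀ l, ∑ i, s i * x i l = 0 := by
    intro l
    have h := congrFun heqf l
    simpa [Finset.sum_apply] using h
  refine rigid_integral s b x hs hb hineq heq ?_
  intro d hdsum hdtight
  by_contra hd0
  set δ : Fin n × Fin 6 → ℝ := fun q =>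
    if Amat.mulVec (d q.1) q.2 = 0 then 1
    else (b q.1 q.2 - Amat.mulVec (x q.1) q.2) / |Amat.mulVec (d q.1) q.2| with hδ
  have hδpos : ∀ q, 0 < δ q := by
    intro q
    rw [hδ]
    dsimp only
    split_ifs with h
    · norm_num
    · apply div_pos
      · have hle := hineq q.1 q.2
        rcases lt_or_eq_of_le hle with hlt | heqt
        · linarith
        · exact absurd (hdtight q.1 q.2 heqt) h
      · exact abs_pos.mpr h
  set F : Finset ℝ := insert 1 (Finset.univ.image δ) with hF
  have hFne : F.Nonempty := ⟨1, Finset.mem_insert_self _ _⟩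
  set ε := F.min' hFne with hεdef
  have hεδ : ∀ q, ε ≤ δ q := fun q =>
    Finset.min'_le _ _ (Finset.mem_insert_of_mem (Finset.mem_image_of_mem δ (Finset.mem_univ q)))
  have hεpos : 0 < ε := by
    have hmem2 : ε ∈ insert (1 : ℝ) (Finset.univ.image δ) := F.min'_mem hFne
    rcases Finset.mem_insert.mp hmem2 with h | h
    · rw [h]; norm_num
    · obtain ⟨q, _, hq⟩ := Finset.mem_image.mp h
      rw [← hq]; exact hδpos q
  have hmem : ∀ c : ℝ, |c| ≤ ε → (x + c • d) ∈ {y : Fin n → Fin 2 → ℝ |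
      (∀ i, ∀ r : Fin 6, Amat.mulVec (y i) r ≤ b i r) ∧ (∑ i : Fin n, s i • y i) = 0} := by
    intro c hc
    constructor
    · intro i r
      have hexp : (x + c • d) i = x i + c • d i := rfl
      rw [hexp, Matrix.mulVec_add, Matrix.mulVec_smul, Pi.add_apply, Pi.smul_apply,
        smul_eq_mul]
      by_cases hz : Amat.mulVec (d i) r = 0
      · rw [hz, mul_zero, add_zero]; exact hineq i r
      · have h1 : c * Amat.mulVec (d i) r ≤ |c| * |Amat.mulVec (d i) r| := by
          calc c * Amat.mulVec (d i) r ≤ |c * Amat.mulVec (d i) r| := le_abs_self _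
          _ = |c| * |Amat.mulVec (d i) r| := abs_mul _ _
        have habs : 0 < |Amat.mulVec (d i) r| := abs_pos.mpr hz
        have h2 : |c| * |Amat.mulVec (d i) r| ≤ ε * |Amat.mulVec (d i) r| := by
          apply mul_le_mul_of_nonneg_right hc (le_of_lt habs)
        have h3 : ε * |Amat.mulVec (d i) r| ≤ δ (i, r) * |Amat.mulVec (d i) r| := by
          apply mul_le_mul_of_nonneg_right (hεδ (i, r)) (le_of_lt habs)
        have h4 : δ (i, r) * |Amat.mulVec (d i) r| = b i r - Amat.mulVec (x i) r := by
          rw [hδ]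
          dsimp only
          rw [if_neg hz, div_mul_cancel₀ _ (ne_of_gt habs)]
        linarith
    · funext l
      rw [Finset.sum_apply, Pi.zero_apply]
      have hexp : ∀ i, (s i • (x + c • d) i) l = s i * x i l + c * (s i * d i l) := by
        intro i
        have : (x + c • d) i = x i + c • d i := rfl
        rw [this]
        simp only [Pi.smul_apply, Pi.add_apply, smul_eq_mul]
        ring
      rw [Finset.sum_congr rfl (fun i _ => hexp i), Finset.sum_add_distrib,
        ← Finset.mul_sum, heq l, hdsum l, mul_zero, add_zero]
  have h₁ := hmem ε (by rw [abs_of_pos hεpos])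
  have h₂ := hmem (-ε) (by rw [abs_neg, abs_of_pos hεpos])
  have hseg : x ∈ openSegment ℝ (x + ε • d) (x + (-ε) • d) := by
    refine ⟨1/2, 1/2, by norm_num, by norm_num, by norm_num, ?_⟩
    module
  have hcontr := hext h₁ h₂ hseg
  have : ε • d = 0 := by
    have := congrArg (fun y => y - x) hcontr
    simpa [add_sub_cancel_left] using this
  rcases smul_eq_zero.mp this with h | h
  · exact absurd h (ne_of_gt hεpos)
  · exact hd0 h

lemma P_isCompact :
    IsCompact {y : Fin n → Fin 2 → ℝ |
      (∀ i, ∀ r : Fin 6, Amat.mulVec (y i) r ≤ b i r) ∧ (∑ i : Fin n, s i • y i) = 0} := by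
  apply Metric.isCompact_of_isClosed_isBounded
  · rw [Set.setOf_and]
    apply IsClosed.inter
    · have hset : {y : Fin n → Fin 2 → ℝ | ∀ i, ∀ r : Fin 6, Amat.mulVec (y i) r ≤ b i r}
          = ⋂ i, ⋂ r, {y : Fin n → Fin 2 → ℝ | Amat.mulVec (y i) r ≤ b i r} := by
        ext y; simp [Set.mem_iInter]
      rw [hset]
      refine isClosed_iInter fun i => isClosed_iInter fun r => ?_
      have hcl : ∀ l : Fin 2, Continuous fun y : Fin n → Fin 2 → ℝ => y i l := fun l =>
        (continuous_apply l).comp (continuous_apply i)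
      have hcont : Continuous fun y : Fin n → Fin 2 → ℝ => Amat.mulVec (y i) r := by
        have hfn : (fun y : Fin n → Fin 2 → ℝ => Amat.mulVec (y i) r)
            = fun y => Amat r 0 * y i 0 + Amat r 1 * y i 1 := by
          funext y; rw [amat_mulVec]
        rw [hfn]
        exact (continuous_const.mul (hcl 0)).add (continuous_const.mul (hcl 1))
      exact isClosed_le hcont continuous_const
    · refine isClosed_eq ?_ continuous_const
      exact continuous_finset_sum _ fun i _ => (continuous_apply i).const_smul (s i)
  · set S : ℝ := ∑ i : Fin n, ∑ r : Fin 6, |b i r| with hS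
    have hSb : ∀ i r, |b i r| ≤ S := by
      intro i r
      have h1 : |b i r| ≤ ∑ r : Fin 6, |b i r| :=
        Finset.single_le_sum (f := fun r : Fin 6 => |b i r|)
          (fun r _ => abs_nonneg _) (Finset.mem_univ r)
      have h2 : ∑ r : Fin 6, |b i r| ≤ S := by
        rw [hS]
        exact Finset.single_le_sum (f := fun i => ∑ r : Fin 6, |b i r|)
          (fun i _ => Finset.sum_nonneg fun r _ => abs_nonneg _) (Finset.mem_univ i)
      linarith
    have hSnn : 0 ≤ S :=
      Finset.sum_nonneg fun i _ => Finset.sum_nonneg fun r _ => abs_nonneg _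
    apply Bornology.IsBounded.subset (Metric.isBounded_closedBall (x := (0 : Fin n → Fin 2 → ℝ))
      (r := 1 + S))
    intro y hy
    rw [Metric.mem_closedBall, dist_zero_right]
    rw [pi_norm_le_iff_of_nonneg (by linarith)]
    intro i
    rw [pi_norm_le_iff_of_nonneg (by linarith)]
    intro l
    rw [Real.norm_eq_abs, abs_le]
    have h0 := hy.1 i 0
    have h1 := hy.1 i 1
    have h2 := hy.1 i 2
    have h3 := hy.1 i 3
    rw [amat_mulVec0] at h0
    rw [amat_mulVec1] at h1
    rw [amat_mulVec2] at h2
    rw [amat_mulVec3] at h3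
    have hb0 := hSb i 0
    have hb1 := hSb i 1
    have hb2 := hSb i 2
    have hb3 := hSb i 3
    have e0 := le_abs_self (b i 0); have e1 := le_abs_self (b i 1)
    have e2 := le_abs_self (b i 2); have e3 := le_abs_self (b i 3)
    rcases fin2_cases l with rfl | rfl
    · constructor <;> [linarith; linarith]
    · constructor <;> [linarith; linarith]

end Main

theorem blockSystem_integral_polyhedron (n p : ℕ) (hp : p ≤ n)
    (b : Fin n → Fin 6 → ℝ) (hb : ∀ i r, ∃ z : ℤ, b i r = z) :
    let P : Set (Fin n → Fin 2 → ℝ) :=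
      {x | (∀ i, ∀ r : Fin 6, Amat.mulVec (x i) r ≤ b i r) ∧
        (∑ i : Fin n, (if (i : ℕ) < p then (1 : ℝ) else -1) • x i) = 0}
    (∀ x ∈ Set.extremePoints ℝ P, ∀ i l, ∃ z : ℤ, x i l = (z : ℝ)) ∧
    (∀ i : Fin n, ∀ y ∈ Set.extremePoints ℝ ((fun x : Fin n → Fin 2 → ℝ => x i) '' P),
      ∀ l, ∃ z : ℤ, y l = (z : ℝ)) := by
  intro P
  set s : Fin n → ℝ := fun i => if (i : ℕ) < p then (1 : ℝ) else -1 with hsdef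
  have hs : ∀ i, s i = 1 ∨ s i = -1 := by
    intro i
    rw [hsdef]
    dsimp only
    split_ifs
    · exact Or.inl rfl
    · exact Or.inr rfl
  have hb' : ∀ i r, IsInt (b i r) := hb
  have hPeq : P = {y : Fin n → Fin 2 → ℝ |
      (∀ i, ∀ r : Fin 6, Amat.mulVec (y i) r ≤ b i r) ∧ (∑ i : Fin n, s i • y i) = 0} := rfl
  constructor
  · intro x hx i l
    rw [hPeq] at hx
    exact extremePoint_integral s b x hs hb' hx i l
  · intro i y hy l
    rw [hPeq] at hy
    set Pset : Set (Fin n → Fin 2 → ℝ) := {y : Fin n → Fin 2 → ℝ |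
      (∀ i, ∀ r : Fin 6, Amat.mulVec (y i) r ≤ b i r) ∧ (∑ i : Fin n, s i • y i) = 0} with hPset
    have hPc : IsCompact Pset := P_isCompact s b
    have hFclosed : IsClosed ((fun x : Fin n → Fin 2 → ℝ => x i) ⁻¹' {y}) :=
      isClosed_singleton.preimage (continuous_apply i)
    have hFcomp : IsCompact (Pset ∩ (fun x : Fin n → Fin 2 → ℝ => x i) ⁻¹' {y}) :=
      hPc.inter_right hFclosed
    have hFne : (Pset ∩ (fun x : Fin n → Fin 2 → ℝ => x i) ⁻¹' {y}).Nonempty := by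
      obtain ⟨x₀, hx₀P, hx₀i⟩ := hy.1
      exact ⟨x₀, hx₀P, hx₀i⟩
    have hext : IsExtreme ℝ Pset (Pset ∩ (fun x : Fin n → Fin 2 → ℝ => x i) ⁻¹' {y}) := by
      constructor
      · exact Set.inter_subset_left
      · rintro x₁ hx₁ x₂ hx₂ z ⟨hzP, hzi⟩ hzseg
        have hzi' : z i = y := hzi
        obtain ⟨a, c, ha, hc, hac, hsum⟩ := hzseg
        have hyseg : y ∈ openSegment ℝ (x₁ i) (x₂ i) := by
          refine ⟨a, c, ha, hc, hac, ?_⟩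
          rw [← hzi']
          have hfi := congrFun hsum i
          simpa using hfi
        have h12 := hy.2 (Set.mem_image_of_mem _ hx₁) (Set.mem_image_of_mem _ hx₂) hyseg
        exact ⟨hx₁, h12⟩
    obtain ⟨x₀, hx₀ext⟩ := hFcomp.extremePoints_nonempty hFne
    have hx₀P := hext.extremePoints_subset_extremePoints hx₀ext
    have hint := extremePoint_integral s b x₀ hs hb' hx₀P
    have hx₀i : x₀ i = y := (hx₀ext.1).2
    rw [← hx₀i]
    exact hint i l
end

section
/- Let K be a finite index set, and for each k ∈ K let I_k, J_k ⊆ {1,...,ℓ} and fix reals a_i, b_j. For a symmetric set D ⊆ [0,1] (i.e., D = 1−D), define F(D) as the set of functions f : D×[ℓ] → R satisfying Σ_{i∈I_k} a_i f(x,i) + Σ_{j∈J_k} b_j f(1−x,j) = 0 for all x ∈ D and k ∈ K. Then for any integer m > 2 the following are equivalent: (1) F([0,1]) contains a nonzero function; (2) F([0,1]) contains a nonzero continuous piecewise linear function vanishing at x = 0 and x = 1 in every coordinate i; (3) F({1/m, (m−1)/m}) contains a nonzero function. -/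
/-- `f` satisfies the system of functional equations on the symmetric domain `D`. -/
def SatSystem {ℓ : ℕ} {K : Type*} (I J : K → Finset (Fin ℓ)) (a b : Fin ℓ → ℝ)
    (D : Set ℝ) (f : ℝ → Fin ℓ → ℝ) : Prop :=
  ∀ x ∈ D, ∀ k : K,
    (∑ i ∈ I k, a i * f x i) + (∑ j ∈ J k, b j * f (1 - x) j) = 0

/-- `g : ℝ → ℝ` is continuous piecewise linear on `[0,1]`: continuous there, and there is a
finite set of breakpoints away from which it is affine. -/
def CPwl (g : ℝ → ℝ) : Prop :=
  ContinuousOn g (Set.Icc 0 1) ∧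
  ∃ B : Finset ℝ, ∀ x y : ℝ, 0 ≤ x → y ≤ 1 →
    (∀ b ∈ B, b ∉ Set.Ioo x y) → ∃ c d : ℝ, ∀ z ∈ Set.Icc x y, g z = c * z + d

/-- Tent function: 0 at 0, 1 at 1/M, 0 at (M-1)/M and beyond. -/
noncomputable def tentC (M x : ℝ) : ℝ := max 0 (min (M * x) ((M - 1 - M * x) / (M - 2)))

lemma tentC_cont (M : ℝ) : Continuous (tentC M) := by
  unfold tentC; fun_prop

lemma tentC_left {M : ℝ} (hM : 3 ≤ M) {z : ℝ} (h0 : 0 ≤ z) (h1 : M * z ≤ 1) :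
    tentC M z = M * z := by
  have hM2 : (0:ℝ) < M - 2 := by linarith
  have hle : M * z ≤ (M - 1 - M * z) / (M - 2) := by
    rw [le_div_iff₀ hM2]; nlinarith
  unfold tentC
  rw [min_eq_left hle, max_eq_right (mul_nonneg (by linarith) h0)]

lemma tentC_mid {M : ℝ} (hM : 3 ≤ M) {z : ℝ} (h0 : 1 ≤ M * z) (h1 : M * z ≤ M - 1) :
    tentC M z = (M - 1 - M * z) / (M - 2) := by
  have hM2 : (0:ℝ) < M - 2 := by linarith
  have hle : (M - 1 - M * z) / (M - 2) ≤ M * z := by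
    rw [div_le_iff₀ hM2]; nlinarith
  unfold tentC
  rw [min_eq_right hle, max_eq_right (div_nonneg (by linarith) (le_of_lt hM2))]

lemma tentC_right {M : ℝ} (hM : 3 ≤ M) {z : ℝ} (h1 : M - 1 ≤ M * z) :
    tentC M z = 0 := by
  have hM2 : (0:ℝ) < M - 2 := by linarith
  have hle : (M - 1 - M * z) / (M - 2) ≤ 0 := by
    apply div_nonpos_of_nonpos_of_nonneg <;> linarith
  unfold tentC
  rw [max_eq_left (le_trans (min_le_right _ _) hle)]

theorem nontrivial_infinite_system_iff_finite_system
    {ℓ : ℕ} {K : Type*} [Finite K] (I J : K → Finset (Fin ℓ)) (a b : Fin ℓ → ℝ)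
    (m : ℕ) (hm : 2 < m) :
    ((∃ f : ℝ → Fin ℓ → ℝ, SatSystem I J a b (Set.Icc 0 1) f ∧
        ∃ x ∈ Set.Icc (0 : ℝ) 1, ∃ i, f x i ≠ 0) ↔
      (∃ f : ℝ → Fin ℓ → ℝ, SatSystem I J a b (Set.Icc 0 1) f ∧
        (∀ i, CPwl (fun x => f x i)) ∧ (∀ i, f 0 i = 0 ∧ f 1 i = 0) ∧
        ∃ x ∈ Set.Icc (0 : ℝ) 1, ∃ i, f x i ≠ 0)) ∧
    ((∃ f : ℝ → Fin ℓ → ℝ, SatSystem I J a b (Set.Icc 0 1) f ∧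
        ∃ x ∈ Set.Icc (0 : ℝ) 1, ∃ i, f x i ≠ 0) ↔
      (∃ f : ℝ → Fin ℓ → ℝ,
        SatSystem I J a b {(1 : ℝ) / m, (m - 1 : ℝ) / m} f ∧
        ∃ x ∈ ({(1 : ℝ) / m, (m - 1 : ℝ) / m} : Set ℝ), ∃ i, f x i ≠ 0)) := by
  set M : ℝ := (m : ℝ) with hMdef
  have hM : 3 ≤ M := by
    have h3 : (3 : ℕ) ≤ m := hm
    rw [hMdef]
    exact_mod_cast h3
  have hM0 : (0:ℝ) < M := by linarith
  have hMne : M ≠ 0 := ne_of_gt hM0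
  have hM2 : (0:ℝ) < M - 2 := by linarith
  -- basic facts about the two points
  have hp1 : (1:ℝ)/M ∈ Set.Icc (0:ℝ) 1 := by
    constructor
    · positivity
    · rw [div_le_one hM0]; linarith
  have hp2 : (M-1)/M ∈ Set.Icc (0:ℝ) 1 := by
    constructor
    · apply div_nonneg <;> linarith
    · rw [div_le_one hM0]; linarith
  have hsym1 : 1 - (1:ℝ)/M = (M-1)/M := by field_simp
  have hsym2 : 1 - (M-1)/M = (1:ℝ)/M := by field_simp; ring
  have hne12 : (1:ℝ)/M ≠ (M-1)/M := by
    intro h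
    rw [div_eq_div_iff hMne hMne] at h
    nlinarith
  have hmem1 : (1:ℝ)/M ∈ ({(1:ℝ)/M, (M-1)/M} : Set ℝ) := Or.inl rfl
  have hmem2 : (M-1)/M ∈ ({(1:ℝ)/M, (M-1)/M} : Set ℝ) := Or.inr rfl
  -- (1) → (3)
  have h13 : (∃ f : ℝ → Fin ℓ → ℝ, SatSystem I J a b (Set.Icc 0 1) f ∧
        ∃ x ∈ Set.Icc (0 : ℝ) 1, ∃ i, f x i ≠ 0) →
      (∃ f : ℝ → Fin ℓ → ℝ,
        SatSystem I J a b {(1 : ℝ) / m, (m - 1 : ℝ) / m} f ∧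
        ∃ x ∈ ({(1 : ℝ) / m, (m - 1 : ℝ) / m} : Set ℝ), ∃ i, f x i ≠ 0) := by
    rw [← hMdef]
    rintro ⟨f, hf, x₀, hx₀, i₀, hi₀⟩
    have hx₀' : 1 - x₀ ∈ Set.Icc (0:ℝ) 1 := by
      constructor <;> [linarith [hx₀.2]; linarith [hx₀.1]]
    refine ⟨fun y => if y = 1/M then f x₀ else if y = (M-1)/M then f (1-x₀) else 0, ?_, ?_⟩
    · rintro y (rfl | rfl) k
      · rw [hsym1]
        simp only [if_pos rfl, if_neg hne12, if_neg (Ne.symm hne12), if_pos rfl]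
        exact hf x₀ hx₀ k
      · rw [hsym2]
        simp only [if_pos rfl, if_neg hne12, if_neg (Ne.symm hne12)]
        have := hf (1-x₀) hx₀' k
        simpa using this
    · refine ⟨1/M, hmem1, i₀, ?_⟩
      simpa using hi₀
  -- (3) → (2)
  have h32 : (∃ f : ℝ → Fin ℓ → ℝ,
        SatSystem I J a b {(1 : ℝ) / m, (m - 1 : ℝ) / m} f ∧
        ∃ x ∈ ({(1 : ℝ) / m, (m - 1 : ℝ) / m} : Set ℝ), ∃ i, f x i ≠ 0) →
      (∃ f : ℝ → Fin ℓ → ℝ, SatSystem I J a b (Set.Icc 0 1) f ∧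
        (∀ i, CPwl (fun x => f x i)) ∧ (∀ i, f 0 i = 0 ∧ f 1 i = 0) ∧
        ∃ x ∈ Set.Icc (0 : ℝ) 1, ∃ i, f x i ≠ 0) := by
    rintro ⟨f, hf, x₀, hx₀, i₀, hi₀⟩
    set g : ℝ → Fin ℓ → ℝ :=
      fun x i => tentC M x * f (1/M) i + tentC M (1-x) * f ((M-1)/M) i with hg
    -- values of tentC at the key points
    have hc0 : tentC M 0 = 0 := by
      rw [tentC_left hM le_rfl (by rw [mul_zero]; norm_num)]; ring
    have hc1 : tentC M 1 = 0 := tentC_right hM (by nlinarith)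
    have hcp1 : tentC M (1/M) = 1 := by
      rw [tentC_left hM (le_of_lt (by positivity)) (by rw [mul_one_div, div_self hMne])]
      rw [mul_one_div, div_self hMne]
    have hcp2 : tentC M ((M-1)/M) = 0 := by
      apply tentC_right hM
      rw [mul_div_cancel₀ _ hMne]
    have hgp1 : ∀ i, g (1/M) i = f (1/M) i := by
      intro i; rw [hg]; simp only
      rw [hsym1, hcp1, hcp2]; ring
    have hgp2 : ∀ i, g ((M-1)/M) i = f ((M-1)/M) i := by
      intro i; rw [hg]; simp only
      rw [hsym2, hcp1, hcp2]; ring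
    refine ⟨g, ?_, ?_, ?_, ?_⟩
    · -- SatSystem on [0,1]
      intro x _ k
      have e1 := hf (1/M) hmem1 k
      have e2 := hf ((M-1)/M) hmem2 k
      rw [hsym1] at e1
      rw [hsym2] at e2
      have hA : (∑ i ∈ I k, a i * g x i)
          = tentC M x * (∑ i ∈ I k, a i * f (1/M) i)
          + tentC M (1-x) * (∑ i ∈ I k, a i * f ((M-1)/M) i) := by
        rw [Finset.mul_sum, Finset.mul_sum, ← Finset.sum_add_distrib]
        apply Finset.sum_congr rfl
        intros
        rw [hg]
        ring
      have hC : (∑ j ∈ J k, b j * g (1-x) j)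
          = tentC M (1-x) * (∑ j ∈ J k, b j * f (1/M) j)
          + tentC M x * (∑ j ∈ J k, b j * f ((M-1)/M) j) := by
        rw [Finset.mul_sum, Finset.mul_sum, ← Finset.sum_add_distrib]
        apply Finset.sum_congr rfl
        intros
        rw [hg]
        simp only [show (1 : ℝ) - (1 - x) = x by ring]
        ring
      rw [hA, hC]
      linear_combination tentC M x * e1 + tentC M (1-x) * e2
    · -- CPwl in each coordinate
      intro i
      constructor
      · apply Continuous.continuousOn
        rw [hg]
        exact ((tentC_cont M).mul continuous_const).add
          (((tentC_cont M).comp (continuous_const.sub continuous_id)).mul continuous_const)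
      · refine ⟨{0, 1/M, (M-1)/M, 1}, ?_⟩
        intro x y hx hy hB
        have hb1 : (1:ℝ)/M ≤ x ∨ y ≤ 1/M := by
          have := hB (1/M) (by simp)
          simp only [Set.mem_Ioo, not_and_or, not_lt] at this
          exact this
        have hb2 : (M-1)/M ≤ x ∨ y ≤ (M-1)/M := by
          have := hB ((M-1)/M) (by simp)
          simp only [Set.mem_Ioo, not_and_or, not_lt] at this
          exact this
        rcases hb1 with hb1 | hb1
        · rcases hb2 with hb2 | hb2
          · -- x ≥ (M-1)/M : right piece
            refine ⟨-(M * f ((M-1)/M) i), M * f ((M-1)/M) i, ?_⟩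
            intro z hz
            have hz1 : M - 1 ≤ M * z := by
              have : (M-1)/M ≤ z := le_trans hb2 hz.1
              calc M - 1 = M * ((M-1)/M) := by field_simp
                _ ≤ M * z := by exact mul_le_mul_of_nonneg_left this (le_of_lt hM0)
            have hz2 : 0 ≤ 1 - z := by linarith [le_trans hz.2 hy]
            have hz3 : M * (1 - z) ≤ 1 := by nlinarith
            rw [hg]; simp only
            rw [tentC_right hM hz1, tentC_left hM hz2 hz3]
            ring
          · -- 1/M ≤ x, y ≤ (M-1)/M : middle piece
            refine ⟨M * (f ((M-1)/M) i - f (1/M) i) / (M-2),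
              ((M-1) * f (1/M) i - f ((M-1)/M) i) / (M-2), ?_⟩
            intro z hz
            have hzl : 1 ≤ M * z := by
              have : (1:ℝ)/M ≤ z := le_trans hb1 hz.1
              calc (1:ℝ) = M * (1/M) := by field_simp
                _ ≤ M * z := mul_le_mul_of_nonneg_left this (le_of_lt hM0)
            have hzr : M * z ≤ M - 1 := by
              have : z ≤ (M-1)/M := le_trans hz.2 hb2
              calc M * z ≤ M * ((M-1)/M) := mul_le_mul_of_nonneg_left this (le_of_lt hM0)
                _ = M - 1 := by field_simp
            have hzl' : 1 ≤ M * (1 - z) := by nlinarith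
            have hzr' : M * (1 - z) ≤ M - 1 := by nlinarith
            rw [hg]; simp only
            rw [tentC_mid hM hzl hzr, tentC_mid hM hzl' hzr']
            field_simp
            ring
        · -- y ≤ 1/M : left piece
          refine ⟨M * f (1/M) i, 0, ?_⟩
          intro z hz
          have hz0 : 0 ≤ z := le_trans hx hz.1
          have hz1 : M * z ≤ 1 := by
            have : z ≤ 1/M := le_trans hz.2 hb1
            calc M * z ≤ M * (1/M) := mul_le_mul_of_nonneg_left this (le_of_lt hM0)
              _ = 1 := by field_simp
          have hz2 : M - 1 ≤ M * (1 - z) := by nlinarith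
          rw [hg]; simp only
          rw [tentC_left hM hz0 hz1, tentC_right hM hz2]
          ring
    · intro i
      constructor
      · rw [hg]; simp only
        rw [hc0, show (1:ℝ) - 0 = 1 by ring, hc1]; ring
      · rw [hg]; simp only
        rw [hc1, show (1:ℝ) - 1 = 0 by ring, hc0]; ring
    · rcases hx₀ with rfl | rfl
      · exact ⟨1/M, hp1, i₀, by rw [hgp1 i₀]; exact hi₀⟩
      · exact ⟨(M-1)/M, hp2, i₀, by rw [hgp2 i₀]; exact hi₀⟩
  -- (2) → (1) trivial
  have h21 : (∃ f : ℝ → Fin ℓ → ℝ, SatSystem I J a b (Set.Icc 0 1) f ∧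
        (∀ i, CPwl (fun x => f x i)) ∧ (∀ i, f 0 i = 0 ∧ f 1 i = 0) ∧
        ∃ x ∈ Set.Icc (0 : ℝ) 1, ∃ i, f x i ≠ 0) →
      (∃ f : ℝ → Fin ℓ → ℝ, SatSystem I J a b (Set.Icc 0 1) f ∧
        ∃ x ∈ Set.Icc (0 : ℝ) 1, ∃ i, f x i ≠ 0) := by
    rintro ⟨f, hf, _, _, hx⟩
    exact ⟨f, hf, hx⟩
  constructor
  · exact ⟨fun h => h32 (h13 h), h21⟩
  · exact ⟨h13, fun h => h21 (h32 h)⟩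
end

section
/- (Hidden Interval Lemma, 2D) Let f, g, h : R^2 → R be continuous and let F, F̃ ⊆ R^2 × R^2 be convex sets with f(u)+g(v)=h(u+v) for all (u,v) ∈ F ∪ F̃. Suppose the sum-projection p3(F) := {u+v : (u,v)∈F} equals p3(F̃) and is full-dimensional in R^2; suppose p1(F) = {u¹ + λ d¹ : λ∈[0,1]}, p2(F) = {u² + λ d² : λ∈[0,1]}, p1(F̃) = {ũ¹ + λ d¹ : λ∈[0,1]} (same direction d¹), p2(F̃) = {ũ² + λ d̃² : λ∈[0,1]}, where (d¹,d²), (d¹,d̃²), and (d²,d̃²) are each linearly independent pairs. Then there exists c ∈ R^2 such that f, g, h are affine with gradient c with respect to the line span(d¹) over p_i(F) and p_i(F̃) for i = 1,2,3. -/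
noncomputable section

abbrev V2 := Fin 2 → ℝ

def proj1 (F : Set (V2 × V2)) : Set V2 := (fun p : V2 × V2 => p.1) '' F
def proj2 (F : Set (V2 × V2)) : Set V2 := (fun p : V2 × V2 => p.2) '' F
def proj3 (F : Set (V2 × V2)) : Set V2 := (fun p : V2 × V2 => p.1 + p.2) '' F

/-- `φ` is affine with gradient `c` with respect to the line spanned by `d` over `U`. -/
def AffineWrtLine (φ : V2 → ℝ) (U : Set V2) (d c : V2) : Prop :=
  ∀ x ∈ U, ∀ y ∈ U, (∃ r : ℝ, y - x = r • d) → φ y - φ x = dotProduct c (y - x)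

open Set


lemma locAdd_linear (k : ℝ → ℝ) (hk : Continuous k) {δ : ℝ} (hδ : 0 < δ)
    (hadd : ∀ s t : ℝ, |s| < δ → |t| < δ → |s + t| < δ → k (s + t) = k s + k t) :
    ∃ c : ℝ, ∀ s : ℝ, |s| < δ → k s = c * s := by
  have hk0 : k 0 = 0 := by
    have := hadd 0 0 (by simpa using hδ) (by simpa using hδ) (by simpa using hδ)
    simpa using this.symm
  -- natural multiples
  have hmul : ∀ (n : ℕ) (s : ℝ), (n : ℝ) * |s| < δ → k (n * s) = n * k s := by
    intro n
    induction n with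
    | zero => intro s _; simpa using hk0
    | succ n ih =>
      intro s hs
      have hcast : ((n+1 : ℕ) : ℝ) = (n : ℝ) + 1 := by push_cast; ring
      rw [hcast] at hs
      have habs := abs_nonneg s
      have hnn : (0:ℝ) ≤ (n:ℝ) := Nat.cast_nonneg n
      have hns : (n : ℝ) * |s| < δ := by nlinarith
      have hs1 : |s| < δ := by nlinarith
      have h1 : |(n : ℝ) * s| < δ := by rw [abs_mul, Nat.abs_cast]; exact hns
      have h2 : |(n : ℝ) * s + s| < δ := by
        have : |(n : ℝ) * s + s| = ((n:ℝ)+1) * |s| := by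
          rw [← add_one_mul, abs_mul, abs_of_nonneg (by linarith : (0:ℝ) ≤ (n:ℝ)+1)]
        rw [this]; exact hs
      have e : ((n : ℕ) + 1 : ℝ) * s = (n : ℝ) * s + s := by ring
      push_cast
      rw [e, hadd _ _ h1 hs1 h2, ih s hns]
      ring
  -- canonical denominator
  set N : ℝ → ℕ := fun s => ⌊2 * |s| / δ⌋₊ + 1 with hN
  have hNpos : ∀ s, 0 < N s := fun s => Nat.succ_pos _
  have hNlt : ∀ s : ℝ, |s| / (N s) < δ / 2 := by
    intro s
    rw [div_lt_iff₀ (by exact_mod_cast hNpos s)]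
    have h1 : 2 * |s| / δ < (N s : ℝ) := by
      have := Nat.lt_floor_add_one (2 * |s| / δ)
      simpa [hN] using this
    rw [div_lt_iff₀ hδ] at h1
    nlinarith [(Nat.cast_pos (α := ℝ)).mpr (hNpos s)]
  set K : ℝ → ℝ := fun s => (N s : ℝ) * k (s / N s) with hK
  have habsdiv : ∀ (s : ℝ) (n : ℕ), 0 < n → |s / n| = |s| / n := by
    intro s n hn
    rw [abs_div, abs_of_nonneg (by exact_mod_cast Nat.zero_le n : (0:ℝ) ≤ (n:ℝ))]
  have key : ∀ (s : ℝ) (n m : ℕ), 0 < n → 0 < m → |s| / n < δ → |s| / m < δ →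
      (n : ℝ) * k (s / n) = (m : ℝ) * k (s / m) := by
    intro s n m hn hm h1 h2
    have hn' : (0:ℝ) < n := by exact_mod_cast hn
    have hm' : (0:ℝ) < m := by exact_mod_cast hm
    have e1 : k (s / n) = m * k (s / (n * m)) := by
      have harg : (m : ℝ) * |s / ((n:ℝ) * m)| < δ := by
        have : |s / ((n:ℝ) * m)| = |s| / ((n:ℝ)*m) := by
          rw [abs_div, abs_of_nonneg (show (0:ℝ) ≤ (n:ℝ)*(m:ℝ) by positivity)]
        rw [this]
        calc (m:ℝ) * (|s| / ((n:ℝ)*m)) = |s| / n := by field_simp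
          _ < δ := h1
      have := hmul m (s / ((n:ℝ)*m)) harg
      rw [show (m:ℝ) * (s / ((n:ℝ)*m)) = s / n by field_simp] at this
      exact this
    have e2 : k (s / m) = n * k (s / (n * m)) := by
      have harg : (n : ℝ) * |s / ((n:ℝ) * m)| < δ := by
        have : |s / ((n:ℝ) * m)| = |s| / ((n:ℝ)*m) := by
          rw [abs_div, abs_of_nonneg (show (0:ℝ) ≤ (n:ℝ)*(m:ℝ) by positivity)]
        rw [this]
        calc (n:ℝ) * (|s| / ((n:ℝ)*m)) = |s| / m := by field_simp
          _ < δ := h2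
      have := hmul n (s / ((n:ℝ)*m)) harg
      rw [show (n:ℝ) * (s / ((n:ℝ)*m)) = s / m by field_simp] at this
      exact this
    rw [e1, e2]; ring
  have hKdef : ∀ (s : ℝ) (n : ℕ), 0 < n → |s| / n < δ → K s = n * k (s / n) := by
    intro s n hn h
    exact key s (N s) n (hNpos s) hn ((hNlt s).trans (by linarith)) h
  have hKadd : ∀ s t : ℝ, K (s + t) = K s + K t := by
    intro s t
    set n : ℕ := N s + N t + N (s + t) with hn
    have hnpos : 0 < n := by positivity
    have hle : ∀ u : ℝ, N u ≤ n → |u| / n ≤ |u| / (N u) := by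
      intro u hu
      apply div_le_div_of_nonneg_left (abs_nonneg u) (by exact_mod_cast hNpos u)
      exact_mod_cast hu
    have h1 : |s| / n < δ/2 := lt_of_le_of_lt (hle s (by omega)) (hNlt s)
    have h2 : |t| / n < δ/2 := lt_of_le_of_lt (hle t (by omega)) (hNlt t)
    have h3 : |s + t| / n < δ := lt_of_le_of_lt (hle (s+t) (by omega))
      (by linarith [hNlt (s+t)])
    have hds : |s / n| < δ := by rw [habsdiv s n hnpos]; linarith
    have hdt : |t / n| < δ := by rw [habsdiv t n hnpos]; linarith
    have hdst : |s / n + t / n| < δ := by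
      rw [← add_div, habsdiv (s+t) n hnpos]; exact h3
    rw [hKdef s n hnpos (by linarith), hKdef t n hnpos (by linarith),
      hKdef (s+t) n hnpos h3, add_div, hadd _ _ hds hdt hdst]
    ring
  have hKk : ∀ s : ℝ, |s| < δ → K s = k s := by
    intro s hs
    have := hKdef s 1 one_pos (by simpa using hs)
    simpa using this
  have hKcont : Continuous K := by
    rw [continuous_iff_continuousAt]
    intro x
    obtain ⟨n, hn⟩ := exists_nat_gt ((|x| + 1) / δ)
    have hnpos : 0 < n := by
      by_contra hc
      push_neg at hc
      interval_cases n
      simp only [Nat.cast_zero] at hn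
      have : (0:ℝ) < (|x|+1)/δ := by positivity
      linarith
    have hn' : (0:ℝ) < n := by exact_mod_cast hnpos
    have hb : (|x| + 1) / n < δ := by
      rw [div_lt_iff₀ hn']
      rw [div_lt_iff₀ hδ] at hn
      nlinarith
    have heq : ∀ y ∈ Metric.ball x 1, K y = (n : ℝ) * k (y / n) := by
      intro y hy
      apply hKdef y n hnpos
      have hxy : |y - x| < 1 := by simpa [Real.dist_eq] using hy
      have : |y| < |x| + 1 := by
        have := abs_sub_abs_le_abs_sub y x
        linarith
      calc |y| / (n:ℝ) ≤ (|x|+1)/(n:ℝ) := by gcongr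
        _ < δ := hb
    have hc2 : Continuous fun y : ℝ => (n : ℝ) * k (y / n) := by
      continuity
    apply hc2.continuousAt.congr
    filter_upwards [Metric.ball_mem_nhds x one_pos] with y hy
    exact (heq y hy).symm
  -- additive + continuous ⇒ linear
  have hlin : ∀ s : ℝ, K s = K 1 * s := by
    have hom : ℝ →+ ℝ := AddMonoidHom.mk' K hKadd
    intro s
    have := (AddMonoidHom.mk' K hKadd).toRealLinearMap hKcont |>.map_smul s 1
    have h2 : K (s • 1) = s • K 1 := by
      have h3 := ((AddMonoidHom.mk' K hKadd).toRealLinearMap hKcont).map_smul s 1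
      exact h3
    simpa [mul_comm] using h2
  refine ⟨K 1, fun s hs => ?_⟩
  rw [← hKk s hs, hlin s]



/-- one-sided propagation of local affineness to the right -/
lemma step_affine (φ : ℝ → ℝ)
    (hloc : ∀ p ∈ Set.Ioo (0:ℝ) 1, ∃ ε > 0, ∃ c : ℝ, ∀ y z : ℝ,
      |y - p| < ε → |z - p| < ε → φ z - φ y = c * (z - y))
    (p : ℝ) (hp : p ∈ Set.Ioo (0:ℝ) 1) (ε₀ : ℝ) (hε₀ : 0 < ε₀) (c₀ : ℝ)
    (hc₀ : ∀ y z : ℝ, |y - p| < ε₀ → |z - p| < ε₀ → φ z - φ y = c₀ * (z - y)) :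
    ∀ z ∈ Set.Ico p 1, φ z = φ p + c₀ * (z - p) := by
  intro z hz
  set δ := ε₀ / 2 with hδ
  have hδpos : 0 < δ := by positivity
  set A : Set ℝ := {t ∈ Set.Icc p z | ∀ y ∈ Set.Icc (p - δ) t, φ y = φ p + c₀ * (y - p)} with hA
  have hpA : p ∈ A := by
    refine ⟨⟨le_refl p, hz.1⟩, fun y hy => ?_⟩
    have h1 : |y - p| < ε₀ := by
      rw [abs_lt]; constructor <;> [skip; skip] <;>
        · simp only [hδ] at hy; cases hy; linarith
    have := hc₀ p y (by simpa using hε₀) h1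
    linarith [this]
  have hAne : A.Nonempty := ⟨p, hpA⟩
  have hAbdd : BddAbove A := BddAbove.mono (fun t ht => ht.1) bddAbove_Icc
  set s := sSup A with hs
  have hsmem : s ∈ Set.Icc p z := by
    constructor
    · exact le_csSup hAbdd hpA
    · exact csSup_le hAne (fun t ht => ht.1.2)
  have hsIoo : s ∈ Set.Ioo (0:ℝ) 1 := ⟨lt_of_lt_of_le hp.1 hsmem.1, lt_of_le_of_lt hsmem.2 hz.2⟩
  obtain ⟨ε, hε, c, hc⟩ := hloc s hsIoo
  set γ := min ε δ / 2 with hγ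
  have hγpos : 0 < γ := by positivity
  have h2γε : 2 * γ ≤ ε := by
    have : min ε δ ≤ ε := min_le_left _ _
    simp only [hγ]; linarith
  have hγε : γ < ε := by linarith
  have hγδ : γ ≤ δ := by
    have : min ε δ ≤ δ := min_le_right _ _
    simp only [hγ]; linarith
  obtain ⟨t, htA, hts⟩ : ∃ t ∈ A, s - γ < t := by
    rcases exists_lt_of_lt_csSup hAne (show s - γ < sSup A by rw [← hs]; linarith) with ⟨t, ht1, ht2⟩
    exact ⟨t, ht1, ht2⟩
  have htle : t ≤ s := le_csSup hAbdd htA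
  -- slopes agree on [t - γ, t]
  have hceq : c = c₀ := by
    have h1 : φ t - φ (t - γ) = c * γ := by
      have e1 : |t - γ - s| < ε := by rw [abs_lt]; constructor <;> linarith
      have e2 : |t - s| < ε := by rw [abs_lt]; constructor <;> linarith
      have := hc (t - γ) t e1 e2
      simpa using this
    have h2 : φ t - φ (t - γ) = c₀ * γ := by
      have e1 : φ t = φ p + c₀ * (t - p) := htA.2 t ⟨by linarith [htA.1.1], le_refl t⟩
      have e2 : φ (t - γ) = φ p + c₀ * (t - γ - p) := htA.2 (t - γ)
        ⟨by linarith [htA.1.1], by linarith⟩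
      rw [e1, e2]; ring
    have := h1.symm.trans h2
    exact mul_right_cancel₀ (ne_of_gt hγpos) this
  -- s' ∈ A
  set s' := min z (s + ε / 2) with hs'
  have hs'A : s' ∈ A := by
    refine ⟨⟨le_min hz.1 (by linarith [hsmem.1]), min_le_left _ _⟩, ?_⟩
    intro y hy
    rcases le_or_gt y t with hyt | hyt
    · exact htA.2 y ⟨hy.1, hyt⟩
    · have e1 : |t - s| < ε := by rw [abs_lt]; constructor <;> linarith
      have e2 : |y - s| < ε := by
        rw [abs_lt]
        have : y ≤ s + ε/2 := le_trans hy.2 (min_le_right _ _)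
        constructor <;> linarith
      have := hc t y e1 e2
      have et : φ t = φ p + c₀ * (t - p) := htA.2 t ⟨by linarith [htA.1.1], le_refl t⟩
      rw [hceq, et] at this
      linarith [this]
  have hs'le : s' ≤ s := le_csSup hAbdd hs'A
  have hsz : s = z := by
    by_contra hne
    have hlt : s < z := lt_of_le_of_ne hsmem.2 hne
    have : s < s' := by
      simp only [hs', lt_min_iff]
      exact ⟨hlt, by linarith⟩
    linarith
  have hs'z : s' = z := by
    simp only [hs', hsz]
    exact min_eq_left (by linarith)
  have hzA : z ∈ A := hs'z ▸ hs'A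
  have := hzA.2 z ⟨by linarith [hz.1], le_refl z⟩
  linarith [this]

lemma prop_affine (φ : ℝ → ℝ) (hφ : Continuous φ)
    (hloc : ∀ p ∈ Set.Ioo (0:ℝ) 1, ∃ ε > 0, ∃ c : ℝ, ∀ y z : ℝ,
      |y - p| < ε → |z - p| < ε → φ z - φ y = c * (z - y)) :
    ∃ C : ℝ, (∀ y ∈ Set.Icc (0:ℝ) 1, ∀ z ∈ Set.Icc (0:ℝ) 1, φ z - φ y = C * (z - y)) ∧
      (∀ p ∈ Set.Ioo (0:ℝ) 1, ∀ ε > 0, ∀ c : ℝ,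
        (∀ y z : ℝ, |y - p| < ε → |z - p| < ε → φ z - φ y = c * (z - y)) → c = C) := by
  have hhalf : (1/2 : ℝ) ∈ Set.Ioo (0:ℝ) 1 := by norm_num
  obtain ⟨ε₀, hε₀, c₀, hc₀⟩ := hloc (1/2) hhalf
  have hR0 : True := trivial
  -- main affine relation
  have hmain : ∀ x ∈ Set.Icc (0:ℝ) 1, φ x = φ (1/2) + c₀ * (x - 1/2) := by
    have hR : ∀ z ∈ Set.Ico (1/2 : ℝ) 1, φ z = φ (1/2) + c₀ * (z - 1/2) :=
      step_affine φ hloc (1/2) hhalf ε₀ hε₀ c₀ hc₀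
    -- left part via reflection
    set φ' : ℝ → ℝ := fun x => φ (1 - x) with hφ'
    have hloc' : ∀ p ∈ Set.Ioo (0:ℝ) 1, ∃ ε > 0, ∃ c : ℝ, ∀ y z : ℝ,
        |y - p| < ε → |z - p| < ε → φ' z - φ' y = c * (z - y) := by
      intro p hp
      have hp' : (1 - p) ∈ Set.Ioo (0:ℝ) 1 := ⟨by linarith [hp.2], by linarith [hp.1]⟩
      obtain ⟨ε, hε, c, hc⟩ := hloc (1-p) hp'
      refine ⟨ε, hε, -c, fun y z hy hz => ?_⟩
      have h1 : |(1 - y) - (1 - p)| < ε := by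
        rw [show (1 - y) - (1 - p) = -(y - p) by ring, abs_neg]; exact hy
      have h2 : |(1 - z) - (1 - p)| < ε := by
        rw [show (1 - z) - (1 - p) = -(z - p) by ring, abs_neg]; exact hz
      have := hc (1 - y) (1 - z) h1 h2
      simp only [hφ']
      rw [this]; ring
    have hc₀' : ∀ y z : ℝ, |y - (1/2 : ℝ)| < ε₀ → |z - (1/2:ℝ)| < ε₀ →
        φ' z - φ' y = (-c₀) * (z - y) := by
      intro y z hy hz
      have h1 : |(1 - y) - (1/2 : ℝ)| < ε₀ := by
        rw [show (1 - y) - (1/2:ℝ) = -(y - 1/2) by ring, abs_neg]; exact hy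
      have h2 : |(1 - z) - (1/2 : ℝ)| < ε₀ := by
        rw [show (1 - z) - (1/2:ℝ) = -(z - 1/2) by ring, abs_neg]; exact hz
      have := hc₀ (1 - y) (1 - z) h1 h2
      simp only [hφ']
      rw [this]; ring
    have hL : ∀ z ∈ Set.Ico (1/2:ℝ) 1, φ' z = φ' (1/2) + (-c₀) * (z - 1/2) :=
      step_affine φ' hloc' (1/2) hhalf ε₀ hε₀ (-c₀) hc₀'
    -- combine: φ x = φ (1/2) + c₀ (x - 1/2) on Ioo 0 1
    have hIoo : ∀ x ∈ Set.Ioo (0:ℝ) 1, φ x = φ (1/2) + c₀ * (x - 1/2) := by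
      intro x hx
      rcases le_or_gt (1/2 : ℝ) x with hx2 | hx2
      · exact hR x ⟨hx2, hx.2⟩
      · have : (1 - x) ∈ Set.Ico (1/2:ℝ) 1 := ⟨by linarith, by linarith [hx.1]⟩
        have := hL (1 - x) this
        simp only [hφ'] at this
        rw [show (1 : ℝ) - (1 - x) = x by ring] at this
        rw [show (1 : ℝ) - (1/2 : ℝ) = 1/2 by norm_num] at this
        rw [this]; ring
    -- extend to Icc by continuity
    have hIcc : ∀ x ∈ Set.Icc (0:ℝ) 1, φ x = φ (1/2) + c₀ * (x - 1/2) := by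
      have hEq : Set.EqOn φ (fun x => φ (1/2) + c₀ * (x - 1/2)) (Set.Ioo (0:ℝ) 1) := hIoo
      have := hEq.closure hφ (continuous_const.add (continuous_const.mul (continuous_id.sub continuous_const)))
      rw [closure_Ioo (by norm_num : (0:ℝ) ≠ 1)] at this
      exact this
    exact hIcc
  refine ⟨c₀, ?_, ?_⟩
  · intro y hy z hz
    rw [hmain y hy, hmain z hz]; ring
  · intro p hp ε hε c hc
    set γ := min ε (1 - p) / 2 with hγ
    have hγpos : 0 < γ := by
      have h1 : 0 < 1 - p := by linarith [hp.2]
      positivity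
    have hγε : γ < ε := by
      have := min_le_left ε (1 - p)
      simp only [hγ]; linarith
    have hγp : p + γ ≤ 1 := by
      have := min_le_right ε (1 - p)
      simp only [hγ]; linarith
    have h1 : φ (p + γ) - φ p = c * γ := by
      have habs : |p + γ - p| < ε := by
        rw [show p + γ - p = γ by ring, abs_of_pos hγpos]; exact hγε
      have := hc p (p + γ) (by simpa using hε) habs
      rw [show p + γ - p = γ by ring] at this
      exact this
    have h2 : φ (p + γ) - φ p = c₀ * γ := by
      rw [hmain p ⟨le_of_lt hp.1, le_of_lt hp.2⟩, hmain (p + γ) ⟨by linarith [hp.1], hγp⟩]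
      ring
    exact mul_right_cancel₀ (ne_of_gt hγpos) (h1.symm.trans h2)


set_option maxHeartbeats 8000000 in
theorem hidden_interval_lemma
    (f g h : V2 → ℝ) (hf : Continuous f) (hg : Continuous g) (hh : Continuous h)
    (F Ftil : Set (V2 × V2)) (hF : Convex ℝ F) (hFtil : Convex ℝ Ftil)
    (hadd : ∀ p ∈ F ∪ Ftil, f p.1 + g p.2 = h (p.1 + p.2))
    (hp3 : proj3 F = proj3 Ftil) (hfull : (interior (proj3 F)).Nonempty)
    (u1 u2 ut1 ut2 d1 d2 dt2 : V2)
    (hp1F : proj1 F = {x | ∃ l ∈ Set.Icc (0 : ℝ) 1, x = u1 + l • d1})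
    (hp2F : proj2 F = {x | ∃ l ∈ Set.Icc (0 : ℝ) 1, x = u2 + l • d2})
    (hp1Ft : proj1 Ftil = {x | ∃ l ∈ Set.Icc (0 : ℝ) 1, x = ut1 + l • d1})
    (hp2Ft : proj2 Ftil = {x | ∃ l ∈ Set.Icc (0 : ℝ) 1, x = ut2 + l • dt2})
    (hli1 : LinearIndependent ℝ ![d1, d2])
    (hli2 : LinearIndependent ℝ ![d1, dt2])
    (hli3 : LinearIndependent ℝ ![d2, dt2]) :
    ∃ c : V2,
      AffineWrtLine f (proj1 F) d1 c ∧ AffineWrtLine f (proj1 Ftil) d1 c ∧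
      AffineWrtLine g (proj2 F) d1 c ∧ AffineWrtLine g (proj2 Ftil) d1 c ∧
      AffineWrtLine h (proj3 F) d1 c ∧ AffineWrtLine h (proj3 Ftil) d1 c := by
  classical
  -- ## bases and coordinates
  have hdim : Fintype.card (Fin 2) = Module.finrank ℝ V2 := by
    simp [Module.finrank_fin_fun]
  set B : Module.Basis (Fin 2) ℝ V2 := basisOfLinearIndependentOfCardEqFinrank hli1 hdim with hBdef
  have hB : ⇑B = ![d1, d2] := coe_basisOfLinearIndependentOfCardEqFinrank hli1 hdim
  set B' : Module.Basis (Fin 2) ℝ V2 := basisOfLinearIndependentOfCardEqFinrank hli2 hdim with hB'def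
  have hB' : ⇑B' = ![d1, dt2] := coe_basisOfLinearIndependentOfCardEqFinrank hli2 hdim
  set α : V2 →ₗ[ℝ] ℝ := B.coord 0 with hαdef
  set β : V2 →ₗ[ℝ] ℝ := B.coord 1 with hβdef
  set α' : V2 →ₗ[ℝ] ℝ := B'.coord 0 with hα'def
  set β' : V2 →ₗ[ℝ] ℝ := B'.coord 1 with hβ'def
  have hB0 : B 0 = d1 := by rw [show B 0 = (⇑B) 0 from rfl, hB]; rfl
  have hB1 : B 1 = d2 := by rw [show B 1 = (⇑B) 1 from rfl, hB]; rfl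
  have hB'0 : B' 0 = d1 := by rw [show B' 0 = (⇑B') 0 from rfl, hB']; rfl
  have hB'1 : B' 1 = dt2 := by rw [show B' 1 = (⇑B') 1 from rfl, hB']; rfl
  have hαd1 : α d1 = 1 := by
    rw [hαdef, ← hB0, Module.Basis.coord_apply, Module.Basis.repr_self]; simp
  have hαd2 : α d2 = 0 := by
    rw [hαdef, ← hB1, Module.Basis.coord_apply, Module.Basis.repr_self]; simp
  have hβd1 : β d1 = 0 := by
    rw [hβdef, ← hB0, Module.Basis.coord_apply, Module.Basis.repr_self]; simp
  have hβd2 : β d2 = 1 := by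
    rw [hβdef, ← hB1, Module.Basis.coord_apply, Module.Basis.repr_self]; simp
  have hα'd1 : α' d1 = 1 := by
    rw [hα'def, ← hB'0, Module.Basis.coord_apply, Module.Basis.repr_self]; simp
  have hα'dt2 : α' dt2 = 0 := by
    rw [hα'def, ← hB'1, Module.Basis.coord_apply, Module.Basis.repr_self]; simp
  have hβ'd1 : β' d1 = 0 := by
    rw [hβ'def, ← hB'0, Module.Basis.coord_apply, Module.Basis.repr_self]; simp
  have hβ'dt2 : β' dt2 = 1 := by
    rw [hβ'def, ← hB'1, Module.Basis.coord_apply, Module.Basis.repr_self]; simp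
  have hdecomp : ∀ z : V2, α z • d1 + β z • d2 = z := by
    intro z
    have := B.sum_repr z
    rw [Fin.sum_univ_two, hB0, hB1] at this
    simpa [hαdef, hβdef, Module.Basis.coord_apply] using this
  have hdecomp' : ∀ z : V2, α' z • d1 + β' z • dt2 = z := by
    intro z
    have := B'.sum_repr z
    rw [Fin.sum_univ_two, hB'0, hB'1] at this
    simpa [hα'def, hβ'def, Module.Basis.coord_apply] using this
  -- facts from hli3
  have hli3' : dt2 ≠ 0 ∧ ∀ a : ℝ, a • dt2 ≠ d2 := by
    rw [linearIndependent_fin2] at hli3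
    simpa using hli3
  have hαdt2 : α dt2 ≠ 0 := by
    intro h0
    have hd := hdecomp dt2
    rw [h0, zero_smul, zero_add] at hd
    rcases eq_or_ne (β dt2) 0 with hb | hb
    · rw [hb, zero_smul] at hd; exact hli3'.1 hd.symm
    · have h2 := congrArg (fun v : V2 => (β dt2)⁻¹ • v) hd
      simp only [smul_smul, inv_mul_cancel₀ hb, one_smul] at h2
      exact hli3'.2 _ h2.symm
  have hα'd2 : α' d2 ≠ 0 := by
    intro h0
    have hd := hdecomp' d2
    rw [h0, zero_smul, zero_add] at hd
    exact hli3'.2 (β' d2) hd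
  -- the auxiliary directions e, e'
  set e : V2 := (α dt2)⁻¹ • dt2 with hedef
  set e' : V2 := (α' d2)⁻¹ • d2 with he'def
  have hαe : α e = 1 := by rw [hedef, map_smul, smul_eq_mul, inv_mul_cancel₀ hαdt2]
  have hα'e : α' e = 0 := by rw [hedef, map_smul, hα'dt2, smul_zero]
  have hαe' : α e' = 0 := by rw [he'def, map_smul, hαd2, smul_zero]
  have hα'e' : α' e' = 1 := by rw [he'def, map_smul, smul_eq_mul, inv_mul_cancel₀ hα'd2]
  have hd1ee' : d1 = e + e' := by
    set w : V2 := d1 - e - e' with hwdef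
    have hαw : α w = 0 := by
      rw [hwdef, map_sub, map_sub, hαd1, hαe, hαe']; ring
    have hα'w : α' w = 0 := by
      rw [hwdef, map_sub, map_sub, hα'd1, hα'e, hα'e']; ring
    have hw : β w • d2 = w := by
      have := hdecomp w
      rw [hαw, zero_smul, zero_add] at this
      exact this
    have hβw : β w = 0 := by
      have : α' (β w • d2) = 0 := by rw [hw, hα'w]
      rw [map_smul, smul_eq_mul] at this
      exact (mul_eq_zero.mp this).resolve_right hα'd2
    have hw0 : w = 0 := by rw [← hw, hβw, zero_smul]
    have hw1 : d1 - (e + e') = 0 := by rw [← sub_sub]; exact hw0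
    exact sub_eq_zero.mp hw1
  -- ## coordinates and section functions
  set w0 : V2 := u1 + u2 with hw0def
  set w0' : V2 := ut1 + ut2 with hw0'def
  set Λ : V2 → ℝ := fun x => α (x - w0) with hΛdef
  set Λ' : V2 → ℝ := fun x => α' (x - w0') with hΛ'def
  set Mc : V2 → ℝ := fun x => β (x - w0) with hMdef
  set Mc' : V2 → ℝ := fun x => β' (x - w0') with hM'def
  set φ : ℝ → ℝ := fun l => f (u1 + l • d1) with hφdef
  set ψ : ℝ → ℝ := fun l => f (ut1 + l • d1) with hψdef
  have hφc : Continuous φ := by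
    apply hf.comp
    exact continuous_const.add (continuous_id.smul continuous_const)
  have hψc : Continuous ψ := by
    apply hf.comp
    exact continuous_const.add (continuous_id.smul continuous_const)
  set P : Set V2 := proj3 F with hPdef
  have hPconv : Convex ℝ P := by
    have himg : P = ⇑(LinearMap.fst ℝ V2 V2 + LinearMap.snd ℝ V2 V2) '' F := by
      apply Set.image_congr
      intro p _
      simp [LinearMap.add_apply]
    rw [himg]
    exact hF.linear_image _
  -- membership lemmas
  have memP : ∀ x ∈ P, Λ x ∈ Set.Icc (0:ℝ) 1 ∧ Mc x ∈ Set.Icc (0:ℝ) 1 ∧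
      h x = φ (Λ x) + g (u2 + Mc x • d2) := by
    intro x hx
    obtain ⟨p, hpF, rfl⟩ := hx
    have h1 : p.1 ∈ proj1 F := ⟨p, hpF, rfl⟩
    have h2 : p.2 ∈ proj2 F := ⟨p, hpF, rfl⟩
    rw [hp1F] at h1
    rw [hp2F] at h2
    obtain ⟨l, hl, hpl⟩ := h1
    obtain ⟨m, hm, hpm⟩ := h2
    have hsub : p.1 + p.2 - w0 = l • d1 + m • d2 := by
      rw [hpl, hpm, hw0def]; abel
    have hΛx : Λ (p.1 + p.2) = l := by
      rw [hΛdef]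
      simp only [hsub, map_add, map_smul, hαd1, hαd2, smul_eq_mul]
      ring
    have hMx : Mc (p.1 + p.2) = m := by
      rw [hMdef]
      simp only [hsub, map_add, map_smul, hβd1, hβd2, smul_eq_mul]
      ring
    have hhx : h (p.1 + p.2) = φ l + g (u2 + m • d2) := by
      rw [← hadd p (Or.inl hpF), hpl, hpm, hφdef]
    rw [hΛx, hMx]
    exact ⟨hl, hm, hhx⟩
  have memPt : ∀ x ∈ P, Λ' x ∈ Set.Icc (0:ℝ) 1 ∧ Mc' x ∈ Set.Icc (0:ℝ) 1 ∧
      h x = ψ (Λ' x) + g (ut2 + Mc' x • dt2) := by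
    intro x hx
    rw [hp3] at hx
    obtain ⟨p, hpF, rfl⟩ := hx
    have h1 : p.1 ∈ proj1 Ftil := ⟨p, hpF, rfl⟩
    have h2 : p.2 ∈ proj2 Ftil := ⟨p, hpF, rfl⟩
    rw [hp1Ft] at h1
    rw [hp2Ft] at h2
    obtain ⟨l, hl, hpl⟩ := h1
    obtain ⟨m, hm, hpm⟩ := h2
    have hsub : p.1 + p.2 - w0' = l • d1 + m • dt2 := by
      rw [hpl, hpm, hw0'def]; abel
    have hΛx : Λ' (p.1 + p.2) = l := by
      rw [hΛ'def]
      simp only [hsub, map_add, map_smul, hα'd1, hα'dt2, smul_eq_mul]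
      ring
    have hMx : Mc' (p.1 + p.2) = m := by
      rw [hM'def]
      simp only [hsub, map_add, map_smul, hβ'd1, hβ'dt2, smul_eq_mul]
      ring
    have hhx : h (p.1 + p.2) = ψ l + g (ut2 + m • dt2) := by
      rw [← hadd p (Or.inr hpF), hpl, hpm, hψdef]
    rw [hΛx, hMx]
    exact ⟨hl, hm, hhx⟩
  -- linearity of coordinates along moves
  have hΛmove : ∀ (x : V2) (a b t : ℝ), Λ (x + a • e + b • e' + t • d1) = Λ x + a + t := by
    intro x a b t
    rw [hΛdef]
    have : x + a • e + b • e' + t • d1 - w0 = (x - w0) + a • e + b • e' + t • d1 := by abel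
    simp only [this, map_add, map_smul, hαe, hαe', hαd1, smul_eq_mul]
    ring
  have hΛ'move : ∀ (x : V2) (a b t : ℝ), Λ' (x + a • e + b • e' + t • d1) = Λ' x + b + t := by
    intro x a b t
    rw [hΛ'def]
    have : x + a • e + b • e' + t • d1 - w0' = (x - w0') + a • e + b • e' + t • d1 := by abel
    simp only [this, map_add, map_smul, hα'e, hα'e', hα'd1, smul_eq_mul]
    ring
  -- increment identities
  have incF : ∀ x ∈ P, ∀ t : ℝ, x + t • d1 ∈ P →
      h (x + t • d1) - h x = φ (Λ x + t) - φ (Λ x) := by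
    intro x hx t hxt
    obtain ⟨_, _, hx3⟩ := memP x hx
    obtain ⟨_, _, hy3⟩ := memP _ hxt
    have hΛt : Λ (x + t • d1) = Λ x + t := by
      have := hΛmove x 0 0 t
      simpa using this
    have hMt : Mc (x + t • d1) = Mc x := by
      rw [hMdef]
      have : x + t • d1 - w0 = (x - w0) + t • d1 := by abel
      simp only [this, map_add, map_smul, hβd1, smul_eq_mul]
      ring
    rw [hy3, hx3, hΛt, hMt]
    ring
  have incFt : ∀ x ∈ P, ∀ t : ℝ, x + t • d1 ∈ P →
      h (x + t • d1) - h x = ψ (Λ' x + t) - ψ (Λ' x) := by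
    intro x hx t hxt
    obtain ⟨_, _, hx3⟩ := memPt x hx
    obtain ⟨_, _, hy3⟩ := memPt _ hxt
    have hΛt : Λ' (x + t • d1) = Λ' x + t := by
      have := hΛ'move x 0 0 t
      simpa using this
    have hMt : Mc' (x + t • d1) = Mc' x := by
      rw [hM'def]
      have : x + t • d1 - w0' = (x - w0') + t • d1 := by abel
      simp only [this, map_add, map_smul, hβ'd1, smul_eq_mul]
      ring
    rw [hy3, hx3, hΛt, hMt]
    ring
  -- surjectivity of the coordinates on P
  have surjΛ : ∀ l ∈ Set.Icc (0:ℝ) 1, ∃ x ∈ P, Λ x = l := by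
    intro l hl
    have hu : u1 + l • d1 ∈ proj1 F := by rw [hp1F]; exact ⟨l, hl, rfl⟩
    obtain ⟨p, hpF, hp1⟩ := hu
    replace hp1 : p.1 = u1 + l • d1 := hp1
    have h2 : p.2 ∈ proj2 F := ⟨p, hpF, rfl⟩
    rw [hp2F] at h2
    obtain ⟨m, _, hpm⟩ := h2
    refine ⟨p.1 + p.2, ⟨p, hpF, rfl⟩, ?_⟩
    have hsub : p.1 + p.2 - w0 = l • d1 + m • d2 := by
      rw [hp1, hpm, hw0def]; abel
    rw [hΛdef]
    simp only [hsub, map_add, map_smul, hαd1, hαd2, smul_eq_mul]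
    ring
  have surjΛ' : ∀ l ∈ Set.Icc (0:ℝ) 1, ∃ x ∈ P, Λ' x = l := by
    intro l hl
    have hu : ut1 + l • d1 ∈ proj1 Ftil := by rw [hp1Ft]; exact ⟨l, hl, rfl⟩
    obtain ⟨p, hpF, hp1⟩ := hu
    replace hp1 : p.1 = ut1 + l • d1 := hp1
    have h2 : p.2 ∈ proj2 Ftil := ⟨p, hpF, rfl⟩
    rw [hp2Ft] at h2
    obtain ⟨m, _, hpm⟩ := h2
    refine ⟨p.1 + p.2, ?_, ?_⟩
    · rw [hp3]; exact ⟨p, hpF, rfl⟩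
    · have hsub : p.1 + p.2 - w0' = l • d1 + m • dt2 := by
        rw [hp1, hpm, hw0'def]; abel
      rw [hΛ'def]
      simp only [hsub, map_add, map_smul, hα'd1, hα'dt2, smul_eq_mul]
      ring
  -- ## interior
  set Ω : Set V2 := interior P with hΩdef
  have hΩP : Ω ⊆ P := interior_subset
  have hΩconv : Convex ℝ Ω := hPconv.interior
  have hΩne : Ω.Nonempty := hfull
  obtain ⟨x₀, hx₀⟩ := hΩne
  have hPcl : ∀ x ∈ P, x ∈ closure Ω := by
    intro x hx
    apply mem_closure_of_tendsto (f := fun t : ℝ => x + t • (x₀ - x)) (b := nhdsWithin 0 (Set.Ioi 0))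
    · have hcont : Continuous (fun t : ℝ => x + t • (x₀ - x)) :=
        continuous_const.add (continuous_id.smul continuous_const)
      have := hcont.tendsto 0
      simp only [zero_smul, add_zero] at this
      exact this.mono_left nhdsWithin_le_nhds
    · filter_upwards [Ioc_mem_nhdsGT_of_mem (Set.mem_Ico.mpr ⟨le_refl (0:ℝ), zero_lt_one⟩)]
        with t ht
      exact hPconv.add_smul_sub_mem_interior hx hx₀ ht
  have hΛaff : ∀ (x y : V2) (θ : ℝ), Λ (θ • x + (1 - θ) • y) = θ * Λ x + (1 - θ) * Λ y := by
    intro x y θ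
    rw [hΛdef]
    simp only [map_sub, map_add, map_smul, smul_eq_mul]
    ring
  have hΛ'aff : ∀ (x y : V2) (θ : ℝ), Λ' (θ • x + (1 - θ) • y) = θ * Λ' x + (1 - θ) * Λ' y := by
    intro x y θ
    rw [hΛ'def]
    simp only [map_sub, map_add, map_smul, smul_eq_mul]
    ring
  have hΛc : Continuous Λ := by
    rw [hΛdef]
    exact α.continuous_of_finiteDimensional.comp (continuous_id.sub continuous_const)
  have hΛ'c : Continuous Λ' := by
    rw [hΛ'def]
    exact α'.continuous_of_finiteDimensional.comp (continuous_id.sub continuous_const)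
  -- projection of the interior covers (0,1)
  have PRJ : ∀ (L : V2 → ℝ), Continuous L →
      (∀ x y θ, L (θ • x + (1 - θ) • y) = θ * L x + (1 - θ) * L y) →
      (∀ x ∈ P, L x ∈ Set.Icc (0:ℝ) 1) →
      (∀ l ∈ Set.Icc (0:ℝ) 1, ∃ x ∈ P, L x = l) →
      ∀ p ∈ Set.Ioo (0:ℝ) 1, ∃ x ∈ Ω, L x = p := by
    intro L hLc hLaff _ hLsurj p hp
    by_contra hn
    push_neg at hn
    have hside : (∀ x ∈ Ω, L x < p) ∨ (∀ x ∈ Ω, p < L x) := by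
      by_contra hcon
      push_neg at hcon
      obtain ⟨⟨x, hxΩ, hxp⟩, ⟨y, hyΩ, hyp⟩⟩ := hcon
      have hxp' : p < L x := lt_of_le_of_ne hxp (fun hc => hn x hxΩ hc.symm)
      have hyp' : L y < p := lt_of_le_of_ne hyp (hn y hyΩ)
      set θ : ℝ := (p - L y) / (L x - L y) with hθdef
      have hden : 0 < L x - L y := by linarith
      have hθ0 : 0 ≤ θ := by
        apply div_nonneg (by linarith) (le_of_lt hden)
      have hθ1 : θ ≤ 1 := by
        rw [hθdef, div_le_one hden]; linarith
      have hz : θ • x + (1 - θ) • y ∈ Ω :=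
        hΩconv hxΩ hyΩ hθ0 (by linarith) (by ring)
      apply hn _ hz
      rw [hLaff x y θ, hθdef]
      field_simp
      ring
    rcases hside with hlt | hgt
    · obtain ⟨z, hzP, hzl⟩ := hLsurj ((p+1)/2) ⟨by linarith [hp.1], by linarith [hp.2]⟩
      have h1 : L z ∈ closure (L '' Ω) := mem_closure_image hLc.continuousAt (hPcl z hzP)
      have h2 : closure (L '' Ω) ⊆ closure (Set.Iio p) := by
        apply closure_mono
        rintro _ ⟨x, hxΩ, rfl⟩
        exact hlt x hxΩ
      rw [closure_Iio] at h2
      have := h2 h1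
      rw [hzl] at this
      simp only [Set.mem_Iic] at this
      linarith [hp.2]
    · obtain ⟨z, hzP, hzl⟩ := hLsurj (p/2) ⟨by linarith [hp.1], by linarith [hp.2]⟩
      have h1 : L z ∈ closure (L '' Ω) := mem_closure_image hLc.continuousAt (hPcl z hzP)
      have h2 : closure (L '' Ω) ⊆ closure (Set.Ioi p) := by
        apply closure_mono
        rintro _ ⟨x, hxΩ, rfl⟩
        exact hgt x hxΩ
      rw [closure_Ioi] at h2
      have := h2 h1
      rw [hzl] at this
      simp only [Set.mem_Ici] at this
      linarith [hp.1]
  have prjΛ : ∀ p ∈ Set.Ioo (0:ℝ) 1, ∃ x ∈ Ω, Λ x = p :=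
    PRJ Λ hΛc hΛaff (fun x hx => (memP x hx).1) surjΛ
  have prjΛ' : ∀ p ∈ Set.Ioo (0:ℝ) 1, ∃ x ∈ Ω, Λ' x = p :=
    PRJ Λ' hΛ'c hΛ'aff (fun x hx => (memPt x hx).1) surjΛ'
  -- points of Ω have interior coordinates
  have hmove_ball : ∀ (x : V2) (r : ℝ), 0 < r → Metric.ball x r ⊆ Ω →
      ∀ a b : ℝ, |a| < r / (‖e‖ + ‖e'‖ + 1) → |b| < r / (‖e‖ + ‖e'‖ + 1) →
      x + a • e + b • e' ∈ Ω := by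
    intro x r hr hball a b ha hb
    have hR : (0:ℝ) < ‖e‖ + ‖e'‖ + 1 := by positivity
    apply hball
    rw [Metric.mem_ball, dist_eq_norm]
    have heq : x + a • e + b • e' - x = a • e + b • e' := by abel
    rw [heq]
    have h1 : ‖a • e + b • e'‖ ≤ |a| * ‖e‖ + |b| * ‖e'‖ := by
      calc ‖a • e + b • e'‖ ≤ ‖a • e‖ + ‖b • e'‖ := norm_add_le _ _
        _ = |a| * ‖e‖ + |b| * ‖e'‖ := by
            rw [norm_smul a e, norm_smul b e', Real.norm_eq_abs, Real.norm_eq_abs]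
    have h2 : |a| * ‖e‖ + |b| * ‖e'‖ < r := by
      have e1 : |a| * ‖e‖ ≤ (r / (‖e‖ + ‖e'‖ + 1)) * ‖e‖ :=
        mul_le_mul_of_nonneg_right (le_of_lt ha) (norm_nonneg e)
      have e2 : |b| * ‖e'‖ ≤ (r / (‖e‖ + ‖e'‖ + 1)) * ‖e'‖ :=
        mul_le_mul_of_nonneg_right (le_of_lt hb) (norm_nonneg e')
      have hq : 0 < r / (‖e‖ + ‖e'‖ + 1) := by positivity
      have hR1 : r / (‖e‖ + ‖e'‖ + 1) * (‖e‖ + ‖e'‖ + 1) = r :=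
        div_mul_cancel₀ r (ne_of_gt hR)
      nlinarith [e1, e2, hq]
    linarith
  have hcoordΩ : ∀ x ∈ Ω, Λ x ∈ Set.Ioo (0:ℝ) 1 ∧ Λ' x ∈ Set.Ioo (0:ℝ) 1 := by
    intro x hx
    obtain ⟨r, hr, hball⟩ := Metric.isOpen_iff.mp isOpen_interior x hx
    set σ : ℝ := r / (‖e‖ + ‖e'‖ + 1) / 2 with hσdef
    have hσpos : 0 < σ := by positivity
    have hσlt : |σ| < r / (‖e‖ + ‖e'‖ + 1) ∧ |(-σ)| < r / (‖e‖ + ‖e'‖ + 1) := by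
      rw [abs_neg, abs_of_pos hσpos]
      constructor <;> · rw [hσdef]; linarith [hσpos]
    have h0 : |(0:ℝ)| < r / (‖e‖ + ‖e'‖ + 1) := by
      rw [abs_zero]; positivity
    have hmem : ∀ s : ℝ, |s| < r / (‖e‖ + ‖e'‖ + 1) →
        (x + s • e ∈ Ω ∧ x + s • e' ∈ Ω) := by
      intro s hs
      constructor
      · have := hmove_ball x r hr hball s 0 hs h0
        simpa using this
      · have := hmove_ball x r hr hball 0 s h0 hs
        simpa using this
    have hp1 := (memP _ (hΩP (hmem σ hσlt.1).1)).1
    have hm1 := (memP _ (hΩP (hmem (-σ) hσlt.2).1)).1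
    have hp2 := (memPt _ (hΩP (hmem σ hσlt.1).2)).1
    have hm2 := (memPt _ (hΩP (hmem (-σ) hσlt.2).2)).1
    have hΛp : Λ (x + σ • e) = Λ x + σ := by
      have := hΛmove x σ 0 0; simpa using this
    have hΛm : Λ (x + (-σ) • e) = Λ x - σ := by
      have := hΛmove x (-σ) 0 0; simp only [zero_smul, add_zero, neg_smul] at this
      rw [neg_smul, this]; ring
    have hΛ'p : Λ' (x + σ • e') = Λ' x + σ := by
      have := hΛ'move x 0 σ 0; simpa using this
    have hΛ'm : Λ' (x + (-σ) • e') = Λ' x - σ := by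
      have := hΛ'move x 0 (-σ) 0; simp only [zero_smul, add_zero, zero_add, neg_smul] at this
      rw [neg_smul, this]; ring
    rw [hΛp] at hp1; rw [hΛm] at hm1; rw [hΛ'p] at hp2; rw [hΛ'm] at hm2
    constructor
    · exact ⟨by linarith [hm1.1], by linarith [hp1.2]⟩
    · exact ⟨by linarith [hm2.1], by linarith [hp2.2]⟩
  -- ## master local lemma
  have ML : ∀ x ∈ Ω, ∃ ε > 0, ∃ c : ℝ,
      (∀ y z : ℝ, |y - Λ x| < ε → |z - Λ x| < ε → φ z - φ y = c * (z - y)) ∧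
      (∀ y z : ℝ, |y - Λ' x| < ε → |z - Λ' x| < ε → ψ z - ψ y = c * (z - y)) := by
    intro x hx
    obtain ⟨r, hr, hball⟩ := Metric.isOpen_iff.mp isOpen_interior x hx
    set ε₀ : ℝ := r / (‖e‖ + ‖e'‖ + 1) with hε₀def
    have hε₀ : 0 < ε₀ := by positivity
    have hLI : ∀ a b t : ℝ, |a| < ε₀ → |b| < ε₀ → |a + t| < ε₀ → |b + t| < ε₀ →
        φ (Λ x + a + t) - φ (Λ x + a) = ψ (Λ' x + b + t) - ψ (Λ' x + b) := by
      intro a b t ha hb hat hbt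
      have hy : x + a • e + b • e' ∈ Ω := hmove_ball x r hr hball a b ha hb
      have hz : x + a • e + b • e' + t • d1 ∈ Ω := by
        have heq : x + a • e + b • e' + t • d1 = x + (a + t) • e + (b + t) • e' := by
          rw [hd1ee']
          module
        rw [heq]
        exact hmove_ball x r hr hball (a+t) (b+t) hat hbt
      have h1 := incF _ (hΩP hy) t (hΩP hz)
      have h2 := incFt _ (hΩP hy) t (hΩP hz)
      have hΛy : Λ (x + a • e + b • e') = Λ x + a := by
        have := hΛmove x a b 0; simpa using this
      have hΛ'y : Λ' (x + a • e + b • e') = Λ' x + b := by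
        have := hΛ'move x a b 0; simpa using this
      rw [hΛy] at h1
      rw [hΛ'y] at h2
      rw [← h1, ← h2]
    set q : ℝ := Λ' x with hqdef
    set k : ℝ → ℝ := fun s => ψ (q + s/2) - ψ (q - s/2) with hkdef
    have hkc : Continuous k := by
      apply Continuous.sub
      · exact hψc.comp (continuous_const.add (continuous_id.div_const 2))
      · exact hψc.comp (continuous_const.sub (continuous_id.div_const 2))
    have kφ : ∀ y z : ℝ, |y - Λ x| < ε₀/2 → |z - Λ x| < ε₀/2 → φ z - φ y = k (z - y) := by
      intro y z hy hz
      have htri : |z - y| < ε₀ := by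
        have := abs_sub_le z (Λ x) y
        have h1 : |z - y| ≤ |z - Λ x| + |Λ x - y| := abs_sub_le z (Λ x) y
        rw [abs_sub_comm (Λ x) y] at h1
        linarith
      have := hLI (y - Λ x) (-(z - y)/2) (z - y) (by linarith [hy])
        (by rw [abs_div, abs_neg]; simp only [abs_two]; linarith [htri, abs_nonneg (z-y)])
        (by rw [show y - Λ x + (z - y) = z - Λ x by ring]; linarith [hz])
        (by rw [show -(z - y)/2 + (z - y) = (z - y)/2 by ring, abs_div]
            simp only [abs_two]; linarith [htri])
      rw [show Λ x + (y - Λ x) + (z - y) = z by ring,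
        show Λ x + (y - Λ x) = y by ring,
        show Λ' x + -(z - y)/2 + (z - y) = q + (z - y)/2 by rw [hqdef]; ring,
        show Λ' x + -(z - y)/2 = q - (z - y)/2 by rw [hqdef]; ring] at this
      rw [this, hkdef]
    have kψ : ∀ y z : ℝ, |y - q| < ε₀/2 → |z - q| < ε₀/2 → ψ z - ψ y = k (z - y) := by
      intro y z hy hz
      have htri : |z - y| < ε₀ := by
        have h1 : |z - y| ≤ |z - q| + |q - y| := abs_sub_le z q y
        rw [abs_sub_comm q y] at h1
        linarith
      have := hLI (-(z - y)/2) (y - q) (z - y)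
        (by rw [abs_div, abs_neg]; simp only [abs_two]; linarith [htri, abs_nonneg (z-y)])
        (by linarith [hy])
        (by rw [show -(z - y)/2 + (z - y) = (z - y)/2 by ring, abs_div]
            simp only [abs_two]; linarith [htri])
        (by rw [show y - q + (z - y) = z - q by ring]; linarith [hz])
      rw [show Λ' x + (y - q) + (z - y) = z by rw [hqdef]; ring,
        show Λ' x + (y - q) = y by rw [hqdef]; ring] at this
      have hmid := kφ (Λ x - (z - y)/2) (Λ x + (z - y)/2)
        (by rw [show Λ x - (z-y)/2 - Λ x = -((z-y)/2) by ring, abs_neg, abs_div]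
            simp only [abs_two]; linarith [htri])
        (by rw [show Λ x + (z-y)/2 - Λ x = (z-y)/2 by ring, abs_div]
            simp only [abs_two]; linarith [htri])
      rw [show Λ x + (z - y)/2 - (Λ x - (z - y)/2) = z - y by ring] at hmid
      rw [show Λ x + -(z - y)/2 + (z - y) = Λ x + (z - y)/2 by ring,
        show Λ x + -(z - y)/2 = Λ x - (z - y)/2 by ring] at this
      rw [← this, hmid]
    have hkadd : ∀ s t : ℝ, |s| < ε₀/4 → |t| < ε₀/4 → |s + t| < ε₀/4 → k (s + t) = k s + k t := by
      intro s t hs ht hst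
      have h1 := kφ (Λ x - (s+t)/2) (Λ x + (s+t)/2)
        (by rw [show Λ x - (s+t)/2 - Λ x = -((s+t)/2) by ring, abs_neg, abs_div]
            simp only [abs_two]; linarith)
        (by rw [show Λ x + (s+t)/2 - Λ x = (s+t)/2 by ring, abs_div]
            simp only [abs_two]; linarith)
      rw [show Λ x + (s + t)/2 - (Λ x - (s + t)/2) = s + t by ring] at h1
      have hmidb : |(s - t)/2| < ε₀/2 := by
        rw [abs_div]; simp only [abs_two]
        have := abs_sub s t
        have h2 : |s - t| ≤ |s| + |t| := abs_sub s t
        linarith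
      have h2 := kφ (Λ x - (s+t)/2) (Λ x + (s-t)/2)
        (by rw [show Λ x - (s+t)/2 - Λ x = -((s+t)/2) by ring, abs_neg, abs_div]
            simp only [abs_two]; linarith)
        (by rw [show Λ x + (s-t)/2 - Λ x = (s-t)/2 by ring]; exact hmidb)
      rw [show Λ x + (s - t)/2 - (Λ x - (s + t)/2) = s by ring] at h2
      have h3 := kφ (Λ x + (s-t)/2) (Λ x + (s+t)/2)
        (by rw [show Λ x + (s-t)/2 - Λ x = (s-t)/2 by ring]; exact hmidb)
        (by rw [show Λ x + (s+t)/2 - Λ x = (s+t)/2 by ring, abs_div]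
            simp only [abs_two]; linarith)
      rw [show Λ x + (s + t)/2 - (Λ x + (s - t)/2) = t by ring] at h3
      rw [← h1, ← h2, ← h3]; ring
    obtain ⟨c, hc⟩ := locAdd_linear k hkc (by positivity : (0:ℝ) < ε₀/4) hkadd
    refine ⟨ε₀/8, by positivity, c, ?_, ?_⟩
    · intro y z hy hz
      have hd : |z - y| < ε₀/4 := by
        have h1 : |z - y| ≤ |z - Λ x| + |Λ x - y| := abs_sub_le z (Λ x) y
        rw [abs_sub_comm (Λ x) y] at h1
        linarith
      rw [kφ y z (by linarith) (by linarith), hc (z - y) hd]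
    · intro y z hy hz
      have hd : |z - y| < ε₀/4 := by
        have h1 : |z - y| ≤ |z - q| + |q - y| := abs_sub_le z q y
        rw [abs_sub_comm q y] at h1
        linarith
      rw [kψ y z (by linarith) (by linarith), hc (z - y) hd]
  -- ## global affineness of φ and ψ
  have hlocφ : ∀ p ∈ Set.Ioo (0:ℝ) 1, ∃ ε > 0, ∃ c : ℝ, ∀ y z : ℝ,
      |y - p| < ε → |z - p| < ε → φ z - φ y = c * (z - y) := by
    intro p hp
    obtain ⟨x, hxΩ, hxp⟩ := prjΛ p hp
    obtain ⟨ε, hε, c, hcφ, _⟩ := ML x hxΩ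
    rw [hxp] at hcφ
    exact ⟨ε, hε, c, hcφ⟩
  have hlocψ : ∀ p ∈ Set.Ioo (0:ℝ) 1, ∃ ε > 0, ∃ c : ℝ, ∀ y z : ℝ,
      |y - p| < ε → |z - p| < ε → ψ z - ψ y = c * (z - y) := by
    intro p hp
    obtain ⟨x, hxΩ, hxp⟩ := prjΛ' p hp
    obtain ⟨ε, hε, c, _, hcψ⟩ := ML x hxΩ
    rw [hxp] at hcψ
    exact ⟨ε, hε, c, hcψ⟩
  obtain ⟨Cφ, hCφ, hCφu⟩ := prop_affine φ hφc hlocφ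
  obtain ⟨Cψ, hCψ, hCψu⟩ := prop_affine ψ hψc hlocψ
  -- the two slopes coincide
  have hCeq : Cφ = Cψ := by
    obtain ⟨ε, hε, c0, hφ0, hψ0⟩ := ML x₀ hx₀
    obtain ⟨hΛx₀, hΛ'x₀⟩ := hcoordΩ x₀ hx₀
    have e1 : c0 = Cφ := hCφu (Λ x₀) hΛx₀ ε hε c0 hφ0
    have e2 : c0 = Cψ := hCψu (Λ' x₀) hΛ'x₀ ε hε c0 hψ0
    rw [← e1, ← e2]
  set C : ℝ := Cφ with hCdef
  have hCψ' : ∀ y ∈ Set.Icc (0:ℝ) 1, ∀ z ∈ Set.Icc (0:ℝ) 1, ψ z - ψ y = C * (z - y) := by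
    rw [hCeq]; exact hCψ
  -- ## the gradient vector
  have hd1ne : d1 ≠ 0 := by
    have := hli1.ne_zero 0
    simpa using this
  have hdd : dotProduct d1 d1 ≠ 0 := by
    intro hz
    exact hd1ne (dotProduct_self_eq_zero.mp hz)
  set cv : V2 := (C / dotProduct d1 d1) • d1 with hcvdef
  have hdot : ∀ r : ℝ, dotProduct cv (r • d1) = C * r := by
    intro r
    rw [hcvdef, smul_dotProduct, dotProduct_smul, smul_eq_mul, smul_eq_mul]
    generalize hD : dotProduct d1 d1 = D at hdd ⊢
    field_simp
  -- ## the six affineness statements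
  -- h on P
  have hP : AffineWrtLine h P d1 cv := by
    intro x hx y hy hex
    obtain ⟨r, hr⟩ := hex
    have hyx : x + r • d1 = y := by rw [← hr]; abel
    have hyP : x + r • d1 ∈ P := by rw [hyx]; exact hy
    have hinc := incF x hx r hyP
    rw [hyx] at hinc
    have hb1 : Λ x ∈ Set.Icc (0:ℝ) 1 := (memP x hx).1
    have hb2 : Λ x + r ∈ Set.Icc (0:ℝ) 1 := by
      have hΛr : Λ (x + r • d1) = Λ x + r := by
        have := hΛmove x 0 0 r; simpa using this
      have := (memP _ hyP).1
      rw [hΛr] at this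
      exact this
    have := hCφ (Λ x) hb1 (Λ x + r) hb2
    rw [hinc, this, hr, hdot r]
    ring
  refine ⟨cv, ?_, ?_, ?_, ?_, hP, ?_⟩
  · -- f on proj1 F
    intro x hx y hy _
    rw [hp1F] at hx hy
    obtain ⟨l₁, hl₁, rfl⟩ := hx
    obtain ⟨l₂, hl₂, rfl⟩ := hy
    have hyx : u1 + l₂ • d1 - (u1 + l₁ • d1) = (l₂ - l₁) • d1 := by
      rw [sub_smul]; abel
    have hφ12 : f (u1 + l₂ • d1) - f (u1 + l₁ • d1) = φ l₂ - φ l₁ := by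
      rw [hφdef]
    rw [hφ12, hCφ l₁ hl₁ l₂ hl₂, hyx, hdot]
  · -- f on proj1 Ftil
    intro x hx y hy _
    rw [hp1Ft] at hx hy
    obtain ⟨l₁, hl₁, rfl⟩ := hx
    obtain ⟨l₂, hl₂, rfl⟩ := hy
    have hyx : ut1 + l₂ • d1 - (ut1 + l₁ • d1) = (l₂ - l₁) • d1 := by
      rw [sub_smul]; abel
    have hψ12 : f (ut1 + l₂ • d1) - f (ut1 + l₁ • d1) = ψ l₂ - ψ l₁ := by
      rw [hψdef]
    rw [hψ12, hCψ' l₁ hl₁ l₂ hl₂, hyx, hdot]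
  · -- g on proj2 F (degenerate)
    intro x hx y hy hex
    rw [hp2F] at hx hy
    obtain ⟨m₁, hm₁, rfl⟩ := hx
    obtain ⟨m₂, hm₂, rfl⟩ := hy
    obtain ⟨r, hr⟩ := hex
    have hyx : u2 + m₂ • d2 - (u2 + m₁ • d2) = (m₂ - m₁) • d2 := by
      rw [sub_smul]; abel
    have hr0 : r = 0 := by
      have happ := congrArg (fun v : V2 => α v) (hr.symm.trans hyx)
      simp only [map_smul, hαd1, hαd2, smul_eq_mul, mul_one, mul_zero] at happ
      exact happ
    have hxy : u2 + m₂ • d2 = u2 + m₁ • d2 := by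
      have : u2 + m₂ • d2 - (u2 + m₁ • d2) = 0 := by
        rw [hr, hr0, zero_smul]
      exact sub_eq_zero.mp this
    rw [hxy]
    simp
  · -- g on proj2 Ftil (degenerate)
    intro x hx y hy hex
    rw [hp2Ft] at hx hy
    obtain ⟨m₁, hm₁, rfl⟩ := hx
    obtain ⟨m₂, hm₂, rfl⟩ := hy
    obtain ⟨r, hr⟩ := hex
    have hyx : ut2 + m₂ • dt2 - (ut2 + m₁ • dt2) = (m₂ - m₁) • dt2 := by
      rw [sub_smul]; abel
    have hr0 : r = 0 := by
      have happ := congrArg (fun v : V2 => α' v) (hr.symm.trans hyx)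
      simp only [map_smul, hα'd1, hα'dt2, smul_eq_mul, mul_one, mul_zero] at happ
      exact happ
    have hxy : ut2 + m₂ • dt2 = ut2 + m₁ • dt2 := by
      have : ut2 + m₂ • dt2 - (ut2 + m₁ • dt2) = 0 := by
        rw [hr, hr0, zero_smul]
      exact sub_eq_zero.mp this
    rw [hxy]
    simp
  · -- h on proj3 Ftil = P
    rw [← hp3]
    exact hP

end
end

section
/- Let T be a subcomplex of a triangulation of R^k whose vertices all lie in (1/q)Z^k. Let E be a set of valid 7-tuples τ = (I1,I2,I3,σ,t) with each I_i ∈ T, σ ∈ {-1,1}^3, t ∈ (1/q)Z^k, such that the vertex sets of the faces of each F(τ) project into the vertices of T. Let π̄_T be piecewise linear over T (determined by interpolation of its vertex values). Then π̄_T is additive over every τ ∈ E (i.e., Σσ_iπ̄_T(x_i)=0 on F(τ) for all τ) if and only if its restriction π̄_T|_{(1/q)Z^k} satisfies the corresponding additivity equations at all points of F(τ) ∩ ((1/q)Z^k)^3 for every τ ∈ E. -/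
/-- `v` lies in the lattice `(1/q)ℤᵏ`. -/
def GridPt (q k : ℕ) (v : Fin k → ℝ) : Prop := ∃ z : Fin k → ℤ, v = fun i => (z i : ℝ) / q

/-- `F(I,σ,t)`: triples `x` with `x i ∈ I i` and `∑ σ i • x i = t`. -/
def tupleF {k : ℕ} (I : Fin 3 → Set (Fin k → ℝ)) (σ : Fin 3 → ℝ) (t : Fin k → ℝ) :
    Set (Fin 3 → (Fin k → ℝ)) :=
  {x | (∀ i, x i ∈ I i) ∧ ∑ i, σ i • x i = t}

theorem additive_iff_additive_on_lattice {k q : ℕ} (hq : 0 < q)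
    (T : Set (Set (Fin k → ℝ)))
    -- T is a subcomplex of a triangulation: its faces are compact convex polytopes (simplices)
    (hT : ∀ C ∈ T, Convex ℝ C ∧ IsCompact C)
    -- all vertices of T lie in (1/q)ℤᵏ
    (hTverts : ∀ C ∈ T, ∀ v ∈ Set.extremePoints ℝ C, GridPt q k v)
    (E : Set ((Fin 3 → Set (Fin k → ℝ)) × (Fin 3 → ℝ) × (Fin k → ℝ)))
    -- each member of E is a valid 7-tuple of faces of T with ±1 signs and lattice translate
    (hEfaces : ∀ τ ∈ E, ∀ i, τ.1 i ∈ T)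
    (hEsign : ∀ τ ∈ E, ∀ i, τ.2.1 i = 1 ∨ τ.2.1 i = -1)
    (hEt : ∀ τ ∈ E, GridPt q k τ.2.2)
    (hEvalid : ∀ τ ∈ E, ∀ i, (fun x : Fin 3 → (Fin k → ℝ) => x i) ''
      tupleF τ.1 τ.2.1 τ.2.2 = τ.1 i)
    -- the vertices of each F(τ) project into the vertices of T
    (hEFverts : ∀ τ ∈ E, ∀ x ∈ Set.extremePoints ℝ (tupleF τ.1 τ.2.1 τ.2.2),
      ∀ i, ∃ C ∈ T, x i ∈ Set.extremePoints ℝ C)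
    -- π̄_T is piecewise linear (affine) over each face of T
    (πT : (Fin k → ℝ) → ℝ)
    (hπT : ∀ C ∈ T, ∃ (l : (Fin k → ℝ) →ₗ[ℝ] ℝ) (c : ℝ), ∀ x ∈ C, πT x = l x + c) :
    (∀ τ ∈ E, ∀ x ∈ tupleF τ.1 τ.2.1 τ.2.2, ∑ i, τ.2.1 i * πT (x i) = 0) ↔
    (∀ τ ∈ E, ∀ x ∈ tupleF τ.1 τ.2.1 τ.2.2, (∀ i, GridPt q k (x i)) →
      ∑ i, τ.2.1 i * πT (x i) = 0) := by

  constructor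
  · intro h τ hτ x hx _
    exact h τ hτ x hx
  · intro h τ hτ x hx
    choose l c hl using fun i => hπT (τ.1 i) (hEfaces τ hτ i)
    set F := tupleF τ.1 τ.2.1 τ.2.2 with hF
    -- the linear constraint map
    set L : ((Fin 3 → Fin k → ℝ) →ₗ[ℝ] (Fin k → ℝ)) :=
      ∑ i, τ.2.1 i • (LinearMap.proj i) with hL
    have hLapp : ∀ y : Fin 3 → Fin k → ℝ, L y = ∑ i, τ.2.1 i • y i := by
      intro y
      simp [hL, LinearMap.sum_apply]
    have hFeq : F = (Set.univ.pi τ.1) ∩ L ⁻¹' {τ.2.2} := by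
      ext y
      simp [hF, tupleF, hLapp, Set.mem_pi]
    have hFconv : Convex ℝ F := by
      rw [hFeq]
      exact (convex_pi fun i _ => (hT (τ.1 i) (hEfaces τ hτ i)).1).inter
        ((convex_singleton _).linear_preimage L)
    have hFcomp : IsCompact F := by
      rw [hFeq]
      exact (isCompact_univ_pi fun i => (hT (τ.1 i) (hEfaces τ hτ i)).2).inter_right
        (IsClosed.preimage L.continuous_of_finiteDimensional isClosed_singleton)
    -- affine description of the sum on F
    have key : ∀ y ∈ F, ∑ i, τ.2.1 i * πT (y i) = ∑ i, τ.2.1 i * (l i (y i) + c i) := by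
      intro y hy
      exact Finset.sum_congr rfl fun i _ => by rw [hl i (y i) (hy.1 i)]
    set Lg : ((Fin 3 → Fin k → ℝ) →ₗ[ℝ] ℝ) :=
      ∑ i, τ.2.1 i • ((l i).comp (LinearMap.proj i)) with hLg
    set g : (Fin 3 → Fin k → ℝ) → ℝ := fun y => Lg y + ∑ i, τ.2.1 i * c i with hg
    have hgeq : ∀ y, g y = ∑ i, τ.2.1 i * (l i (y i) + c i) := by
      intro y
      simp [hg, hLg, LinearMap.sum_apply, Finset.sum_add_distrib, mul_add,
        smul_eq_mul]
    have hZconv : Convex ℝ {y : Fin 3 → Fin k → ℝ | g y = 0} := by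
      have : {y : Fin 3 → Fin k → ℝ | g y = 0}
          = Lg ⁻¹' {-(∑ i, τ.2.1 i * c i)} := by
        ext y
        simp [hg]
        constructor <;> intro hy <;> linarith
      rw [this]
      exact (convex_singleton _).linear_preimage Lg
    have hZclosed : IsClosed {y : Fin 3 → Fin k → ℝ | g y = 0} := by
      have : Continuous g := by
        exact (Lg.continuous_of_finiteDimensional).add continuous_const
      exact isClosed_eq this continuous_const
    have hext : Set.extremePoints ℝ F ⊆ {y | g y = 0} := by
      intro y hy
      have hyF : y ∈ F := hy.1
      have hgrid : ∀ i, GridPt q k (y i) := by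
        intro i
        obtain ⟨C, hC, hyC⟩ := hEFverts τ hτ y hy i
        exact hTverts C hC _ hyC
      have h0 := h τ hτ y hyF hgrid
      rw [key y hyF] at h0
      simpa [hgeq] using h0
    have hsub : F ⊆ {y | g y = 0} := by
      rw [← closure_convexHull_extremePoints hFcomp hFconv]
      exact closure_minimal (convexHull_min hext hZconv) hZclosed
    have := hsub hx
    rw [key x hx, ← hgeq]
    exact this
end

section
/- Let K = conv{v, v + (1/q)d¹, v + (1/q)d²} be a triangle of P_q with edges K1 (in direction d¹), K2 (in direction d²), K3 (the third edge). Suppose π̄ : R² → R is continuous, vanishes on (1/q)Z², vanishes identically on K1, and is additive over the 7-tuple (K1, K2, K, (1,1,−1), t¹) whose additivity set is F = {(t¹+ (λ1/q)d¹, t¹+(λ2/q)d², t¹+(λ1/q)d¹+(λ2/q)d²) : λ1,λ2 ≥ 0, λ1+λ2 ≤ 1} with t¹ = v. Then π̄ is also additive over the 7-tuple (K1, K3, K, (1,1,−1), t²) with t² = v + (1/q)d¹, whose additivity set is {(t²−(λ1/q)d¹, t²+(λ2/q)(d²−d¹), t²−(λ1/q)d¹+(λ2/q)(d²−d¹)) :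 λ1,λ2 ≥ 0, λ1+λ2 ≤ 1}. -/
noncomputable section

/-- The standard basis vectors of `ℝ²`. -/
def e1 : Fin 2 → ℝ := fun i => if i = 0 then 1 else 0
def e2 : Fin 2 → ℝ := fun i => if i = 1 then 1 else 0

theorem additive_over_second_edge_tuple {q : ℕ} (hq : 0 < q)
    (s : ℝ) (hs : s = 1 ∨ s = -1)
    (v : Fin 2 → ℝ) (hv : ∃ z : Fin 2 → ℤ, v = fun i => (z i : ℝ) / q)
    (πbar : (Fin 2 → ℝ) → ℝ) (hcont : Continuous πbar)
    -- πbar vanishes on the lattice (1/q)ℤ²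
    (hgrid : ∀ z : Fin 2 → ℤ, πbar (fun i => (z i : ℝ) / q) = 0)
    -- πbar vanishes identically on the edge K₁ = {v + (λ/q)·d¹ : λ ∈ [0,1]}
    (hK1 : ∀ l ∈ Set.Icc (0 : ℝ) 1, πbar (v + (l / q) • (s • e1)) = 0)
    -- πbar is additive over the 7-tuple (K₁, K₂, K, (1,1,−1), t¹) with t¹ = v
    (hadd : ∀ l1 l2 : ℝ, 0 ≤ l1 → 0 ≤ l2 → l1 + l2 ≤ 1 →
      πbar (v + (l1 / q) • (s • e1)) + πbar (v + (l2 / q) • (s • e2)) -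
        πbar (v + (l1 / q) • (s • e1) + (l2 / q) • (s • e2)) = 0) :
    -- conclusion: πbar is additive over (K₁, K₃, K, (1,1,−1), t²) with t² = v + (1/q)·d¹
    ∀ l1 l2 : ℝ, 0 ≤ l1 → 0 ≤ l2 → l1 + l2 ≤ 1 →
      πbar ((v + (q : ℝ)⁻¹ • (s • e1)) - (l1 / q) • (s • e1)) +
        πbar ((v + (q : ℝ)⁻¹ • (s • e1)) + (l2 / q) • (s • e2 - s • e1)) -
        πbar ((v + (q : ℝ)⁻¹ • (s • e1)) - (l1 / q) • (s • e1) +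
          (l2 / q) • (s • e2 - s • e1)) = 0 := by
  intro l1 l2 h1 h2 h12
  have key : ∀ μ : ℝ, 0 ≤ μ → μ + l2 ≤ 1 →
      πbar (v + (μ / q) • (s • e1) + (l2 / q) • (s • e2)) = πbar (v + (l2 / q) • (s • e2)) := by
    intro μ hμ hμl
    have h := hadd μ l2 hμ h2 hμl
    have h0 := hK1 μ ⟨hμ, by linarith⟩
    linarith
  have e1eq : (v + (q : ℝ)⁻¹ • (s • e1)) - (l1 / q) • (s • e1)
      = v + ((1 - l1) / q) • (s • e1) := by
    rw [sub_div, one_div]; module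
  have e2eq : (v + (q : ℝ)⁻¹ • (s • e1)) + (l2 / q) • (s • e2 - s • e1)
      = v + ((1 - l2) / q) • (s • e1) + (l2 / q) • (s • e2) := by
    rw [sub_div, one_div]; module
  have e3eq : (v + (q : ℝ)⁻¹ • (s • e1)) - (l1 / q) • (s • e1) + (l2 / q) • (s • e2 - s • e1)
      = v + ((1 - l1 - l2) / q) • (s • e1) + (l2 / q) • (s • e2) := by
    rw [show (1 - l1 - l2) / (q:ℝ) = 1/q - l1/q - l2/q by ring, one_div]; module
  rw [e3eq, e1eq, e2eq, key (1 - l2) (by linarith) (by linarith),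
      key (1 - l1 - l2) (by linarith) (by linarith),
      hK1 (1 - l1) ⟨by linarith, by linarith⟩]
  ring

end
end
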